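/- arXiv:1301.6509 — 6 statements merged into one kernel-verified Lean document; each statement's English description precedes it below -/
import Mathlib

section
/- Let a and a′ be two compositions such that a′ is a rearrangement of a (i.e., the multisets of their components coincide). Then for every n, the number of compositions of size n that dominate a equals the number of compositions of size n that dominate a′. -/
/-- A restricted growth function (canonical sequential form of a set partition):
a word over the positive integers whose first letter is 1 and where each letter
is at most one more than the maximum of the preceding letters. -/
def IsRGF (w : List ℕ) : Prop :=
  (∀ x ∈ w, 1 ≤ x) ∧
  (w ≠ [] → w.getD 0 0 = 1) ∧
  ∀ i, i + 1 < w.length → w.getD (i + 1) 0 ≤ ((w.take (i + 1)).foldr max 0) + 1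

/-- Two words of the same length are order-isomorphic: corresponding entries
compare the same way (this preserves equalities as well). -/
def WordOrdIso (s t : List ℕ) : Prop :=
  s.length = t.length ∧
  ∀ i j, i < s.length → j < s.length →
    (s.getD i 0 < s.getD j 0 ↔ t.getD i 0 < t.getD j 0)

/-- `w` contains the pattern `p`: a subsequence of `w` is order-isomorphic to `p`. -/
def PatContains (w p : List ℕ) : Prop := ∃ s : List ℕ, s.Sublist w ∧ WordOrdIso s p

/-- `w` avoids the pattern `p`. -/
def PatAvoids (w p : List ℕ) : Prop := ¬ PatContains w p

/-- `pCount n T` = number of RGFs of length `n` avoiding every pattern in `T`. -/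
noncomputable def pCount (n : ℕ) (T : Set (List ℕ)) : ℕ :=
  {w : List ℕ | IsRGF w ∧ w.length = n ∧ ∀ p ∈ T, PatAvoids w p}.ncard

/-- `b` dominates `a`: `b` has a subsequence componentwise at least `a`. -/
def Dominates (b a : List ℕ) : Prop :=
  ∃ s : List ℕ, s.Sublist b ∧ List.Forall₂ (· ≤ ·) a s

namespace Lemma23

abbrev P (x : ℕ) : ℕ → Bool := fun p => decide (p < x)

lemma tw_dw {x c : ℕ} {w r : List ℕ} (hw : ∀ p ∈ w, p < x) (hc : x ≤ c) :
    (w ++ c :: r).takeWhile (P x) = w ∧ (w ++ c :: r).dropWhile (P x) = c :: r := by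
  induction w with
  | nil =>
      have hc' : ¬ P x c = true := by simpa using Nat.not_lt.mpr hc
      rw [List.nil_append, List.takeWhile_cons_of_neg hc', List.dropWhile_cons_of_neg hc']
      exact ⟨rfl, rfl⟩
  | cons a w ih =>
      have ha : P x a = true := decide_eq_true (hw a (by simp))
      obtain ⟨h1, h2⟩ := ih (fun p hp => hw p (List.mem_cons_of_mem _ hp))
      rw [List.cons_append, List.takeWhile_cons_of_pos ha, List.dropWhile_cons_of_pos ha, h1, h2]
      exact ⟨rfl, rfl⟩

lemma tail_sublist_of_cons {c c' : ℕ} {s r : List ℕ} (h : (c :: s).Sublist (c' :: r)) :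
    s.Sublist r := by
  cases h with
  | cons _ h => exact (List.sublist_cons_self c s).trans h
  | cons_cons _ h => exact h

lemma dw_head : ∀ {b : List ℕ} {p : ℕ → Bool} {c : ℕ} {r : List ℕ},
    b.dropWhile p = c :: r → p c = false := by
  intro b
  induction b with
  | nil => intro p c r h; simp [List.dropWhile] at h
  | cons a t ih =>
      intro p c r h
      by_cases hp : p a = true
      · rw [List.dropWhile_cons_of_pos hp] at h
        exact ih h
      · rw [List.dropWhile_cons_of_neg (by simpa using hp)] at h
        cases h
        simpa using hp

lemma dom_decomp {x : ℕ} {l b : List ℕ} (h : Dominates b (x :: l)) :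
    ∃ c r, b.dropWhile (P x) = c :: r ∧ x ≤ c ∧ Dominates r l := by
  obtain ⟨s, hs, hf⟩ := h
  rw [List.forall₂_cons_left_iff] at hf
  obtain ⟨c', s', hxc, hf', rfl⟩ := hf
  have hs' : (c' :: s').Sublist (b.takeWhile (P x) ++ b.dropWhile (P x)) := by
    rw [List.takeWhile_append_dropWhile]; exact hs
  rw [List.sublist_append_iff] at hs'
  obtain ⟨u, v, he, hu, hv⟩ := hs'
  cases u with
  | cons d u' =>
      have hd : d ∈ b.takeWhile (P x) := hu.subset List.mem_cons_self
      have hdx : d < x := by simpa using List.mem_takeWhile_imp hd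
      have : c' = d := by
        have := congrArg (fun t => List.head? t) he
        simpa using this
      omega
  | nil =>
      simp only [List.nil_append] at he
      subst he
      cases hdw : b.dropWhile (P x) with
      | nil =>
          rw [hdw] at hv
          simp at hv
      | cons c r =>
          rw [hdw] at hv
          have hc : x ≤ c := by
            have := dw_head hdw
            simpa using this
          exact ⟨c, r, rfl, hc, s', tail_sublist_of_cons hv, hf'⟩

lemma dom_build {x c : ℕ} {l w r : List ℕ} (hc : x ≤ c) (hr : Dominates r l) :
    Dominates (w ++ c :: r) (x :: l) := by
  obtain ⟨s, hs, hf⟩ := hr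
  exact ⟨c :: s, (hs.cons₂ c).trans (List.sublist_append_right w (c :: r)),
    List.Forall₂.cons hc hf⟩

def consF (F : List ℕ → List ℕ) (x : ℕ) (b : List ℕ) : List ℕ :=
  match b.dropWhile (P x) with
  | [] => b
  | c :: r => b.takeWhile (P x) ++ c :: F r

lemma consF_eq (F : List ℕ → List ℕ) (x : ℕ) (b : List ℕ) {c : ℕ} {r : List ℕ}
    (h : b.dropWhile (P x) = c :: r) :
    consF F x b = b.takeWhile (P x) ++ c :: F r := by
  unfold consF
  rw [h]

def swapF (x y : ℕ) (b : List ℕ) : List ℕ :=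
  match b.dropWhile (P y) with
  | [] => b
  | c1 :: r1 =>
    match r1.dropWhile (P x) with
    | [] => b
    | c2 :: r => r1.takeWhile (P x) ++ c2 :: (b.takeWhile (P y) ++ c1 :: r)

lemma swapF_eq (x y : ℕ) (b : List ℕ) {c1 c2 : ℕ} {r1 r : List ℕ}
    (h1 : b.dropWhile (P y) = c1 :: r1) (h2 : r1.dropWhile (P x) = c2 :: r) :
    swapF x y b = r1.takeWhile (P x) ++ c2 :: (b.takeWhile (P y) ++ c1 :: r) := by
  unfold swapF
  rw [h1]
  dsimp only
  rw [h2]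

lemma swap_main (x y : ℕ) (l b : List ℕ) (h : Dominates b (y :: x :: l)) :
    (∀ p ∈ swapF x y b, p ∈ b) ∧ (swapF x y b).sum = b.sum ∧
    Dominates (swapF x y b) (x :: y :: l) ∧ swapF y x (swapF x y b) = b := by
  obtain ⟨c1, r1, h1, hc1, hd1⟩ := dom_decomp h
  obtain ⟨c2, r, h2, hc2, hd2⟩ := dom_decomp hd1
  set w1 := b.takeWhile (P y) with hw1def
  set w2 := r1.takeWhile (P x) with hw2def
  have hb : b = w1 ++ c1 :: r1 := by
    rw [hw1def, ← h1, List.takeWhile_append_dropWhile]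
  have hr1 : r1 = w2 ++ c2 :: r := by
    rw [hw2def, ← h2, List.takeWhile_append_dropWhile]
  have hw1 : ∀ p ∈ w1, p < y := fun p hp => by simpa using List.mem_takeWhile_imp hp
  have hw2 : ∀ p ∈ w2, p < x := fun p hp => by simpa using List.mem_takeWhile_imp hp
  have hFb : swapF x y b = w2 ++ c2 :: (w1 ++ c1 :: r) := swapF_eq x y b h1 h2
  refine ⟨?_, ?_, ?_, ?_⟩
  · intro p hp
    rw [hFb] at hp
    rw [hb, hr1]
    simp only [List.mem_append, List.mem_cons] at hp ⊢
    tauto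
  · rw [hFb]
    conv_rhs => rw [hb, hr1]
    simp only [List.sum_append, List.sum_cons]
    omega
  · rw [hFb]
    exact dom_build hc2 (dom_build hc1 hd2)
  · have e1 : (swapF x y b).dropWhile (P x) = c2 :: (w1 ++ c1 :: r) := by
      rw [hFb]; exact (tw_dw hw2 hc2).2
    have e1' : (swapF x y b).takeWhile (P x) = w2 := by
      rw [hFb]; exact (tw_dw hw2 hc2).1
    have e2 : (w1 ++ c1 :: r).dropWhile (P y) = c1 :: r := (tw_dw hw1 hc1).2
    have e2' : (w1 ++ c1 :: r).takeWhile (P y) = w1 := (tw_dw hw1 hc1).1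
    rw [swapF_eq y x (swapF x y b) e1 e2, e2', e1', hb, hr1]

lemma cons_main {x : ℕ} {l l' : List ℕ} {F G : List ℕ → List ℕ}
    (hF : ∀ b, Dominates b l →
      (∀ p ∈ F b, p ∈ b) ∧ (F b).sum = b.sum ∧ Dominates (F b) l' ∧ G (F b) = b)
    (b : List ℕ) (hb : Dominates b (x :: l)) :
    (∀ p ∈ consF F x b, p ∈ b) ∧ (consF F x b).sum = b.sum ∧
    Dominates (consF F x b) (x :: l') ∧ consF G x (consF F x b) = b := by
  obtain ⟨c, r, h1, hc, hd⟩ := dom_decomp hb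
  set w := b.takeWhile (P x) with hwdef
  have hb' : b = w ++ c :: r := by
    rw [hwdef, ← h1, List.takeWhile_append_dropWhile]
  have hw : ∀ p ∈ w, p < x := fun p hp => by simpa using List.mem_takeWhile_imp hp
  obtain ⟨hm, hsum, hdom, hinv⟩ := hF r hd
  have hFb : consF F x b = w ++ c :: F r := consF_eq F x b h1
  refine ⟨?_, ?_, ?_, ?_⟩
  · intro p hp
    rw [hFb] at hp
    rw [hb']
    simp only [List.mem_append, List.mem_cons] at hp ⊢
    rcases hp with hp | hp | hp
    · exact Or.inl hp
    · exact Or.inr (Or.inl hp)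
    · exact Or.inr (Or.inr (hm p hp))
  · rw [hFb]
    conv_rhs => rw [hb']
    simp only [List.sum_append, List.sum_cons]
    omega
  · rw [hFb]
    exact dom_build hc hdom
  · have e1 : (consF F x b).dropWhile (P x) = c :: F r := by
      rw [hFb]; exact (tw_dw hw hc).2
    have e1' : (consF F x b).takeWhile (P x) = w := by
      rw [hFb]; exact (tw_dw hw hc).1
    rw [consF_eq G x (consF F x b) e1, e1', hinv, ← hb']

lemma core {a a' : List ℕ} (h : a.Perm a') :
    ∃ F G : List ℕ → List ℕ,
      (∀ b, Dominates b a →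
        (∀ p ∈ F b, p ∈ b) ∧ (F b).sum = b.sum ∧ Dominates (F b) a' ∧ G (F b) = b) ∧
      (∀ b, Dominates b a' →
        (∀ p ∈ G b, p ∈ b) ∧ (G b).sum = b.sum ∧ Dominates (G b) a ∧ F (G b) = b) := by
  induction h with
  | nil =>
      exact ⟨id, id, fun b hb => ⟨fun p hp => hp, rfl, hb, rfl⟩,
        fun b hb => ⟨fun p hp => hp, rfl, hb, rfl⟩⟩
  | cons x h ih =>
      obtain ⟨F, G, hF, hG⟩ := ih
      exact ⟨consF F x, consF G x, cons_main hF, cons_main hG⟩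
  | swap x y l =>
      exact ⟨swapF x y, swapF y x, swap_main x y l, swap_main y x l⟩
  | trans h1 h2 ih1 ih2 =>
      obtain ⟨F1, G1, hF1, hG1⟩ := ih1
      obtain ⟨F2, G2, hF2, hG2⟩ := ih2
      refine ⟨F2 ∘ F1, G1 ∘ G2, ?_, ?_⟩
      · intro b hb
        obtain ⟨m1, s1, d1, i1⟩ := hF1 b hb
        obtain ⟨m2, s2, d2, i2⟩ := hF2 _ d1
        exact ⟨fun p hp => m1 _ (m2 _ hp), s2.trans s1, d2,
          by simp only [Function.comp_apply]; rw [i2, i1]⟩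
      · intro b hb
        obtain ⟨m2, s2, d2, i2⟩ := hG2 b hb
        obtain ⟨m1, s1, d1, i1⟩ := hG1 _ d2
        exact ⟨fun p hp => m2 _ (m1 _ hp), s1.trans s2, d1,
          by simp only [Function.comp_apply]; rw [i1, i2]⟩

end Lemma23

/-- Lemma 2.3: rearranging a composition does not change the number of
compositions of each size dominating it. -/
theorem stmt1 (a a' : List ℕ) (hpos : ∀ x ∈ a, 1 ≤ x) (hperm : a.Perm a') :
    ∀ n : ℕ,
      {b : List ℕ | (∀ x ∈ b, 1 ≤ x) ∧ b.sum = n ∧ Dominates b a}.ncard =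
      {b : List ℕ | (∀ x ∈ b, 1 ≤ x) ∧ b.sum = n ∧ Dominates b a'}.ncard := by
  intro n
  obtain ⟨F, G, hF, hG⟩ := Lemma23.core hperm
  have hbij : Set.BijOn F
      {b : List ℕ | (∀ x ∈ b, 1 ≤ x) ∧ b.sum = n ∧ Dominates b a}
      {b : List ℕ | (∀ x ∈ b, 1 ≤ x) ∧ b.sum = n ∧ Dominates b a'} := by
    refine ⟨?_, ?_, ?_⟩
    · intro b hb
      obtain ⟨hp, hs, hd⟩ := hb
      obtain ⟨m, s, d, i⟩ := hF b hd
      exact ⟨fun p hp' => hp p (m p hp'), s.trans hs, d⟩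
    · intro b1 h1 b2 h2 he
      have i1 := (hF b1 h1.2.2).2.2.2
      have i2 := (hF b2 h2.2.2).2.2.2
      rw [← i1, ← i2, he]
    · intro t ht
      obtain ⟨m, s, d, i⟩ := hG t ht.2.2
      exact ⟨G t, ⟨fun p hp' => ht.1 p (m p hp'), s.trans ht.2.1, d⟩, i⟩
  rw [← hbij.image_eq, Set.ncard_image_of_injOn hbij.injOn]
end

section
/- Let a = (a₁,…,a_m) be a composition with a_m = 2, and let a′ = (a₁,…,a_{m−1},1,1). Then for every n, the number of compositions of size n that dominate a equals the number of compositions of size n that dominate a′. -/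
lemma dom_mono {u u' a : List ℕ} (h : u.Sublist u') (hd : Dominates u a) : Dominates u' a := by
  obtain ⟨s, hs, hf⟩ := hd
  exact ⟨s, hs.trans h, hf⟩

lemma forall2_split {a b s : List ℕ} (h : List.Forall₂ (· ≤ ·) (a ++ b) s) :
    ∃ s₁ s₂, s = s₁ ++ s₂ ∧ List.Forall₂ (· ≤ ·) a s₁ ∧ List.Forall₂ (· ≤ ·) b s₂ := by
  induction a generalizing s with
  | nil => exact ⟨[], s, rfl, List.Forall₂.nil, h⟩
  | cons x t ih =>
    rw [List.cons_append] at h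
    cases h with
    | cons hx hrest =>
      obtain ⟨s₁, s₂, rfl, h1, h2⟩ := ih hrest
      exact ⟨_ :: s₁, s₂, rfl, List.Forall₂.cons hx h1, h2⟩

lemma dom2_iff {l b : List ℕ} :
    Dominates b (l ++ [2]) ↔ ∃ u c v, b = u ++ c :: v ∧ Dominates u l ∧ 2 ≤ c := by
  constructor
  · rintro ⟨s, hs, hf⟩
    obtain ⟨s₁, s₂, rfl, h1, h2⟩ := forall2_split hf
    obtain ⟨c, s₂', hc, h2', rfl⟩ := List.forall₂_cons_left_iff.mp h2
    have hnil : s₂' = [] := List.forall₂_nil_left_iff.mp h2'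
    subst hnil
    obtain ⟨r₁, r₂, rfl, hr₁, hr₂⟩ := List.append_sublist_iff.mp hs
    have hc' : c ∈ r₂ := List.singleton_sublist.mp hr₂
    obtain ⟨p, q, rfl⟩ := List.append_of_mem hc'
    exact ⟨r₁ ++ p, c, q, by simp, ⟨s₁, hr₁.trans (List.sublist_append_left _ _), h1⟩, hc⟩
  · rintro ⟨u, c, v, rfl, ⟨s, hs, hf⟩, hc⟩
    refine ⟨s ++ [c], List.Sublist.append hs ?_, List.rel_append hf ?_⟩
    · exact List.singleton_sublist.mpr List.mem_cons_self
    · exact List.Forall₂.cons hc List.Forall₂.nil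

lemma dom11_iff {l b : List ℕ} (hb : ∀ x ∈ b, 1 ≤ x) :
    Dominates b (l ++ [1, 1]) ↔ ∃ u v, b = u ++ v ∧ Dominates u l ∧ 2 ≤ v.length := by
  constructor
  · rintro ⟨s, hs, hf⟩
    obtain ⟨s₁, s₂, rfl, h1, h2⟩ := forall2_split hf
    obtain ⟨r₁, r₂, rfl, hr₁, hr₂⟩ := List.append_sublist_iff.mp hs
    refine ⟨r₁, r₂, rfl, ⟨s₁, hr₁, h1⟩, ?_⟩
    have hl2 := h2.length_eq
    have hle := hr₂.length_le
    simp at hl2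
    omega
  · rintro ⟨u, v, rfl, ⟨s, hs, hf⟩, hv⟩
    obtain _ | ⟨x, _ | ⟨y, v'⟩⟩ := v
    · simp at hv
    · simp at hv
    · have hx : 1 ≤ x := hb x (by simp)
      have hy : 1 ≤ y := hb y (by simp)
      refine ⟨s ++ [x, y], List.Sublist.append hs ?_, List.rel_append hf ?_⟩
      · exact List.Sublist.cons₂ x (List.Sublist.cons₂ y (List.nil_sublist v'))
      · exact List.Forall₂.cons hx (List.Forall₂.cons hy List.Forall₂.nil)

lemma phi_not_dom2 {l : List ℕ} (u : List ℕ) (c : ℕ) (hc : 2 ≤ c)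
    (hnb : ¬ Dominates (u ++ [c]) (l ++ [1, 1])) (hposu : ∀ x ∈ u, 1 ≤ x) :
    ¬ Dominates (u ++ List.replicate c 1) (l ++ [2]) := by
  intro hdom
  obtain ⟨u', c', v', heq, hu', hc'⟩ := dom2_iff.mp hdom
  have hposb : ∀ x ∈ u ++ [c], 1 ≤ x := by
    intro x hx
    rcases List.mem_append.mp hx with h | h
    · exact hposu x h
    · simp at h; omega
  by_cases hlen : u.length ≤ u'.length
  · -- c' lies in the replicate part: c' = 1, contradiction
    have h1 : List.drop u'.length (u ++ List.replicate c 1) = c' :: v' := by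
      rw [heq]; exact List.drop_left
    obtain ⟨d, hd⟩ : ∃ d, u'.length = u.length + d := ⟨u'.length - u.length, by omega⟩
    have h2 : List.drop u'.length (u ++ List.replicate c 1) = List.replicate (c - d) 1 := by
      rw [hd, List.drop_append, List.drop_replicate,
        List.drop_eq_nil_of_le (show u.length ≤ u.length + d by omega), List.nil_append,
        Nat.add_sub_cancel_left]
    rw [h1] at h2
    have : c' = 1 := List.eq_of_mem_replicate (h2 ▸ (List.mem_cons_self : c' ∈ c' :: v'))
    omega
  · push_neg at hlen
    have htake : List.take (u'.length + 1) (u ++ List.replicate c 1) =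
        List.take (u'.length + 1) u :=
      List.take_append_of_le_length (by omega)
    have htake2 : List.take (u'.length + 1) (u' ++ c' :: v') = u' ++ [c'] := by
      rw [List.take_append]; simp
    have hpre : u' ++ [c'] = List.take (u'.length + 1) u := by
      rw [← htake2, ← heq, htake]
    have hu : u = (u' ++ [c']) ++ List.drop (u'.length + 1) u := by
      rw [hpre, List.take_append_drop]
    apply hnb
    refine (dom11_iff hposb).mpr
      ⟨u', c' :: (List.drop (u'.length + 1) u ++ [c]), ?_, hu', by simp⟩
    conv_lhs => rw [hu]
    simp

lemma inj_aux {l : List ℕ} (u₁ u₂ : List ℕ) (c₁ c₂ : ℕ)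
    (h2 : Dominates u₂ l) (hc₂ : 2 ≤ c₂)
    (hnb : ¬ Dominates (u₁ ++ [c₁]) (l ++ [1, 1]))
    (hpos : ∀ x ∈ u₁ ++ [c₁], 1 ≤ x)
    (heq : u₁ ++ List.replicate c₁ 1 = u₂ ++ List.replicate c₂ 1)
    (hlt : u₂.length < u₁.length) : False := by
  have hu₁ : u₁ = u₂ ++ List.replicate (min (u₁.length - u₂.length) c₂) 1 := by
    have h0 := congrArg (List.take u₁.length) heq
    rw [List.take_left, show u₁.length = u₂.length + (u₁.length - u₂.length) by omega,
      List.take_append, List.take_replicate] at h0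
    rw [List.take_of_length_le (show u₂.length ≤ u₂.length + (u₁.length - u₂.length) by omega),
      Nat.add_sub_cancel_left] at h0
    exact h0
  apply hnb
  refine (dom11_iff hpos).mpr
    ⟨u₂, List.replicate (min (u₁.length - u₂.length) c₂) 1 ++ [c₁], ?_, h2, ?_⟩
  · rw [← List.append_assoc, ← hu₁]
  · simp; omega

open Classical in
noncomputable def gmap (l b : List ℕ) : List ℕ :=
  if Dominates b (l ++ [1, 1]) then b else b.dropLast ++ List.replicate (b.getLastD 0) 1

lemma gmap_of_dom {l b : List ℕ} (h : Dominates b (l ++ [1, 1])) : gmap l b = b := by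
  rw [gmap, if_pos h]


/-- Lemma 2.4: replacing a final component `2` of a composition by `1,1` does
not change the number of compositions of each size dominating it. -/
theorem stmt2 (l : List ℕ) (hpos : ∀ x ∈ l, 1 ≤ x) :
    ∀ n : ℕ,
      {b : List ℕ | (∀ x ∈ b, 1 ≤ x) ∧ b.sum = n ∧ Dominates b (l ++ [2])}.ncard =
      {b : List ℕ | (∀ x ∈ b, 1 ≤ x) ∧ b.sum = n ∧ Dominates b (l ++ [1, 1])}.ncard := by
  intro n
  classical
  set A := {b : List ℕ | (∀ x ∈ b, 1 ≤ x) ∧ b.sum = n ∧ Dominates b (l ++ [2])} with hAdef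
  set B := {b : List ℕ | (∀ x ∈ b, 1 ≤ x) ∧ b.sum = n ∧ Dominates b (l ++ [1, 1])} with hBdef
  have struct : ∀ b : List ℕ, (∀ x ∈ b, 1 ≤ x) → Dominates b (l ++ [2]) →
      ¬ Dominates b (l ++ [1, 1]) → ∃ u c, b = u ++ [c] ∧ Dominates u l ∧ 2 ≤ c := by
    intro b hb hA2 hB2
    obtain ⟨u, c, v, rfl, hu, hc⟩ := dom2_iff.mp hA2
    cases v with
    | nil => exact ⟨u, c, rfl, hu, hc⟩
    | cons y v' =>
      exact absurd ((dom11_iff hb).mpr ⟨u, c :: y :: v', rfl, hu, by simp⟩) hB2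
  have gmap_concat : ∀ (u : List ℕ) (c : ℕ), ¬ Dominates (u ++ [c]) (l ++ [1, 1]) →
      gmap l (u ++ [c]) = u ++ List.replicate c 1 := by
    intro u c h
    rw [gmap, if_neg h, List.dropLast_concat, List.getLastD_concat]
  have himg : gmap l '' A = B := by
    ext b'
    constructor
    · rintro ⟨b, ⟨hbpos, hbsum, hbdom⟩, rfl⟩
      by_cases hB : Dominates b (l ++ [1, 1])
      · rw [gmap_of_dom hB]; exact ⟨hbpos, hbsum, hB⟩
      · obtain ⟨u, c, rfl, hu, hc⟩ := struct b hbpos hbdom hB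
        rw [gmap_concat u c hB]
        have hpos' : ∀ x ∈ u ++ List.replicate c 1, 1 ≤ x := by
          intro x hx
          rcases List.mem_append.mp hx with h | h
          · exact hbpos x (List.mem_append.mpr (Or.inl h))
          · rw [List.eq_of_mem_replicate h]
        refine ⟨hpos', ?_, ?_⟩
        · have h1 : (u ++ List.replicate c 1).sum = u.sum + c := by simp
          have h2 : (u ++ [c]).sum = u.sum + c := by simp
          omega
        · exact (dom11_iff hpos').mpr ⟨u, List.replicate c 1, rfl, hu, by simp; omega⟩
    · rintro ⟨hpos', hsum', hdom'⟩
      by_cases hA2 : Dominates b' (l ++ [2])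
      · exact ⟨b', ⟨hpos', hsum', hA2⟩, gmap_of_dom hdom'⟩
      · obtain ⟨u₀, v₀, hb', hu₀, hv₀⟩ := (dom11_iff hpos').mp hdom'
        have hex : ∃ j, Dominates (b'.take j) l :=
          ⟨u₀.length, by rw [hb', List.take_left]; exact hu₀⟩
        set j := Nat.find hex with hj
        have hjdom : Dominates (b'.take j) l := Nat.find_spec hex
        have hjmin : ∀ i < j, ¬ Dominates (b'.take i) l := fun i hi => Nat.find_min hex hi
        have hjle : j ≤ u₀.length :=
          Nat.find_min' hex (by rw [hb', List.take_left]; exact hu₀)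
        have hjlen : j ≤ b'.length := hjle.trans (by rw [hb']; simp)
        have hones : ∀ x ∈ b'.drop j, x = 1 := by
          intro x hx
          have hx1 : 1 ≤ x := hpos' x ((List.drop_sublist j b').mem hx)
          by_contra hne
          have hx2 : 2 ≤ x := by omega
          obtain ⟨p, q, hpq⟩ := List.append_of_mem hx
          apply hA2
          refine dom2_iff.mpr ⟨b'.take j ++ p, x, q, ?_,
            dom_mono (List.sublist_append_left _ _) hjdom, hx2⟩
          rw [List.append_assoc, ← hpq, List.take_append_drop]
        set k := (b'.drop j).length with hk
        have hrep : b'.drop j = List.replicate k 1 := List.eq_replicate_of_mem hones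
        have hk2 : 2 ≤ k := by
          have hkd : k = b'.length - j := by rw [hk, List.length_drop]
          have hlen' : b'.length = u₀.length + v₀.length := by rw [hb']; simp
          omega
        have hposb : ∀ x ∈ b'.take j ++ [k], 1 ≤ x := by
          intro x hx
          rcases List.mem_append.mp hx with h | h
          · exact hpos' x ((List.take_sublist j b').mem h)
          · simp at h; omega
        have hnd : ¬ Dominates (b'.take j ++ [k]) (l ++ [1, 1]) := by
          intro hcon
          obtain ⟨u', v', heq', hu', hv'⟩ := (dom11_iff hposb).mp hcon
          have htl : (b'.take j).length = j := by
            rw [List.length_take, min_eq_left hjlen]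
          have hlen2 : u'.length + v'.length = j + 1 := by
            have h := congrArg List.length heq'
            simp only [List.length_append, htl, List.length_singleton] at h
            omega
          have hult : u'.length < j := by omega
          have hu'eq : u' = b'.take u'.length := by
            have h0 := congrArg (List.take u'.length) heq'.symm
            rw [List.take_left, List.take_append_of_le_length (by rw [htl]; omega),
              List.take_take, min_eq_left (le_of_lt hult)] at h0
            exact h0
          exact hjmin u'.length hult (hu'eq ▸ hu')
        refine ⟨b'.take j ++ [k], ⟨hposb, ?_, ?_⟩, ?_⟩
        · have h1 : (b'.take j ++ [k]).sum = (b'.take j).sum + k := by simp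
          have h2 : b'.sum = (b'.take j).sum + (b'.drop j).sum := by
            rw [← List.sum_append, List.take_append_drop]
          have h3 : (b'.drop j).sum = k := by rw [hrep]; simp
          omega
        · exact dom2_iff.mpr ⟨b'.take j, k, [], rfl, hjdom, hk2⟩
        · rw [gmap_concat _ _ hnd, ← hrep, List.take_append_drop]
  have hinj : Set.InjOn (gmap l) A := by
    rintro b₁ ⟨h₁pos, h₁sum, h₁dom⟩ b₂ ⟨h₂pos, h₂sum, h₂dom⟩ hgeq
    by_cases hB₁ : Dominates b₁ (l ++ [1, 1]) <;>
      by_cases hB₂ : Dominates b₂ (l ++ [1, 1])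
    · rw [gmap_of_dom hB₁, gmap_of_dom hB₂] at hgeq; exact hgeq
    · obtain ⟨u₂, c₂, hb₂, hu₂, hc₂⟩ := struct b₂ h₂pos h₂dom hB₂
      subst hb₂
      rw [gmap_of_dom hB₁, gmap_concat u₂ c₂ hB₂] at hgeq
      have hnot : ¬ Dominates (u₂ ++ List.replicate c₂ 1) (l ++ [2]) :=
        phi_not_dom2 u₂ c₂ hc₂ hB₂ (fun x hx => h₂pos x (List.mem_append.mpr (Or.inl hx)))
      exact absurd (hgeq ▸ h₁dom) hnot
    · obtain ⟨u₁, c₁, hb₁, hu₁, hc₁⟩ := struct b₁ h₁pos h₁dom hB₁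
      subst hb₁
      rw [gmap_of_dom hB₂, gmap_concat u₁ c₁ hB₁] at hgeq
      have hnot : ¬ Dominates (u₁ ++ List.replicate c₁ 1) (l ++ [2]) :=
        phi_not_dom2 u₁ c₁ hc₁ hB₁ (fun x hx => h₁pos x (List.mem_append.mpr (Or.inl hx)))
      exact absurd (hgeq ▸ h₂dom) hnot
    · obtain ⟨u₁, c₁, hb₁, hu₁, hc₁⟩ := struct b₁ h₁pos h₁dom hB₁
      obtain ⟨u₂, c₂, hb₂, hu₂, hc₂⟩ := struct b₂ h₂pos h₂dom hB₂
      subst hb₁; subst hb₂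
      rw [gmap_concat u₁ c₁ hB₁, gmap_concat u₂ c₂ hB₂] at hgeq
      rcases lt_trichotomy u₁.length u₂.length with h | h | h
      · exact (inj_aux u₂ u₁ c₂ c₁ hu₁ hc₁ hB₂
          (fun x hx => h₂pos x hx) hgeq.symm h).elim
      · have h12 : u₁ = u₂ := by
          have h' := congrArg (List.take u₁.length) hgeq
          rw [List.take_left] at h'
          rw [h, List.take_left] at h'
          exact h'
        have hcc : c₁ = c₂ := by
          have h' := congrArg List.length hgeq
          simp at h'
          omega
        rw [h12, hcc]
      · exact (inj_aux u₁ u₂ c₁ c₂ hu₂ hc₂ hB₁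
          (fun x hx => h₁pos x hx) hgeq h).elim
  calc A.ncard = (gmap l '' A).ncard := (Set.ncard_image_of_injOn hinj).symm
    _ = B.ncard := by rw [himg]
end

section
/- Let m ≥ 2 be an integer and let τ = τ₁τ₂⋯τ_k be an RGF of length k with exactly m distinct letters such that τ_i = i for each i ∈ [m−1]. Then, as an identity of formal power series in x (each factor 1 − jx being invertible), ∑_{n≥0} p_n(12⋯(m+1), τ) xⁿ = ∑_{n≥0} p_n(12⋯(m+1)) xⁿ − x^k · (1 − (m−1)x)^{−(k−m)} · (1 − mx)^{−1} · ∏_{j=1}^{m−1} (1 − jx)^{−1}. In particular, this generating function depends only on m and the size k of τ, not on τ itself. -/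
/-- The strictly increasing pattern `1 2 ⋯ r`. -/
def incPat (r : ℕ) : List ℕ := (List.range r).map (· + 1)

open List

/-- max of a word -/
def mx (w : List ℕ) : ℕ := w.foldr max 0

lemma mx_append (w : List ℕ) (a : ℕ) : mx (w ++ [a]) = max (mx w) a := by
  induction w with
  | nil => simp [mx]
  | cons b w ih => simp [mx] at ih ⊢; omega

lemma le_mx_of_mem {w : List ℕ} {x : ℕ} (h : x ∈ w) : x ≤ mx w := by
  induction w with
  | nil => simp at h
  | cons b w ih =>
    rcases List.mem_cons.1 h with rfl | h
    · simp [mx]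
    · simp only [mx, List.foldr_cons]
      exact le_max_of_le_right (ih h)

lemma mx_le {w : List ℕ} {M : ℕ} (h : ∀ x ∈ w, x ≤ M) : mx w ≤ M := by
  induction w with
  | nil => simp [mx]
  | cons b w ih =>
    simp only [mx, List.foldr_cons, max_le_iff]
    exact ⟨h b (List.mem_cons_self), ih fun x hx => h x (List.mem_cons_of_mem _ hx)⟩

lemma isRGF_nil : IsRGF [] := by
  refine ⟨by simp, by simp, ?_⟩
  intro i hi; simp at hi

lemma isRGF_snoc_iff {w : List ℕ} {a : ℕ} :
    IsRGF (w ++ [a]) ↔ ((w = [] ∧ a = 1) ∨ (IsRGF w ∧ 1 ≤ a ∧ a ≤ mx w + 1)) := by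
  constructor
  · rintro ⟨h1, h2, h3⟩
    rcases eq_or_ne w [] with rfl | hw
    · left; exact ⟨rfl, by simpa using h2 (by simp)⟩
    · right
      have hlw : 0 < w.length := List.length_pos_iff.2 hw
      refine ⟨⟨?_, ?_, ?_⟩, ?_, ?_⟩
      · exact fun x hx => h1 x (by simp [hx])
      · intro _
        have := h2 (by simp)
        rwa [List.getD_append _ _ _ _ hlw] at this
      · intro i hi
        have hi' : i + 1 < (w ++ [a]).length := by simp; omega
        have := h3 i hi'
        rwa [List.getD_append _ _ _ _ hi, List.take_append_of_le_length (by omega)] at this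
      · exact h1 a (by simp)
      · have hi' : (w.length - 1) + 1 < (w ++ [a]).length := by simp; omega
        have := h3 (w.length - 1) hi'
        rw [List.getD_append_right _ _ _ _ (by omega)] at this
        simp only [show w.length - 1 + 1 = w.length from by omega] at this
        rw [List.take_append_of_le_length (le_refl _), List.take_length] at this
        simpa [mx] using this
  · rintro (⟨rfl, rfl⟩ | ⟨⟨h1, h2, h3⟩, ha1, ha2⟩)
    · refine ⟨by simp, by simp, ?_⟩
      intro i hi; simp at hi
    · refine ⟨?_, ?_, ?_⟩
      · intro x hx
        rcases List.mem_append.1 hx with hx | hx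
        · exact h1 x hx
        · simp at hx; omega
      · intro _
        rcases eq_or_ne w [] with rfl | hw
        · have ha : a = 1 := by simp [mx] at ha2; omega
          simp [ha]
        · rw [List.getD_append _ _ _ _ (List.length_pos_iff.2 hw)]
          exact h2 hw
      · intro i hi
        simp only [List.length_append, List.length_singleton] at hi
        rcases lt_or_ge (i+1) w.length with h | h
        · rw [List.getD_append _ _ _ _ h, List.take_append_of_le_length (by omega)]
          exact h3 i h
        · have hiw : i + 1 = w.length := by omega
          rw [List.getD_append_right _ _ _ _ (by omega), hiw]
          simp only [Nat.sub_self]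
          rw [List.take_append_of_le_length (le_refl _), List.take_length]
          simpa [mx] using ha2

lemma isRGF_dropLast {w : List ℕ} (h : IsRGF w) (hw : w ≠ []) : IsRGF w.dropLast := by
  obtain ⟨w', a, rfl⟩ : ∃ w' a, w = w' ++ [a] := by
    rcases List.eq_nil_or_concat w with rfl | ⟨w', a, hw'⟩
    · exact absurd rfl hw
    · exact ⟨w', a, by simpa [List.concat_eq_append] using hw'⟩
  rw [List.dropLast_concat]
  rcases isRGF_snoc_iff.1 h with ⟨rfl, _⟩ | ⟨h, _, _⟩
  · exact isRGF_nil
  · exact h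

/-- the key structure lemma: an RGF contains 1,2,...,mx as a sublist -/
lemma rgf_range'_sublist {w : List ℕ} (h : IsRGF w) : List.range' 1 (mx w) <+ w := by
  induction w using List.reverseRecOn with
  | nil => simp [mx]
  | append_singleton w a ih =>
    rcases isRGF_snoc_iff.1 h with ⟨rfl, rfl⟩ | ⟨hw, ha1, ha2⟩
    · simp [mx]
    · rw [mx_append]
      rcases lt_or_ge (mx w) a with hlt | hge
      · have : a = mx w + 1 := by omega
        rw [this, max_eq_right (by omega), List.range'_1_concat]  -- range' 1 (mx w + 1) = range' 1 (mx w) ++ [1 + mx w]?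
        exact (ih hw).append (by simp [Nat.add_comm])
      · rw [max_eq_left hge]
        exact (ih hw).trans (List.sublist_append_left _ _)

lemma rgf_mem_of_le_mx {w : List ℕ} (h : IsRGF w) {j : ℕ} (h1 : 1 ≤ j) (h2 : j ≤ mx w) :
    j ∈ w := by
  have := rgf_range'_sublist h
  exact this.subset (List.mem_range'_1.2 ⟨h1, by omega⟩)

lemma rgf_entries {w : List ℕ} (h : IsRGF w) {x : ℕ} (hx : x ∈ w) : 1 ≤ x ∧ x ≤ mx w :=
  ⟨h.1 x hx, le_mx_of_mem hx⟩

lemma wordOrdIso_refl (s : List ℕ) : WordOrdIso s s := ⟨rfl, fun _ _ _ _ => Iff.rfl⟩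

lemma incPat_eq_range' (r : ℕ) : incPat r = List.range' 1 r := by
  rw [List.range'_eq_map_range]
  simp [incPat, Nat.add_comm]

lemma getD_mem {s : List ℕ} {i : ℕ} (h : i < s.length) : s.getD i 0 ∈ s := by
  rw [List.getD_eq_getElem _ _ h]; exact List.getElem_mem h

lemma incPat_getD {r i : ℕ} (h : i < r) : (incPat r).getD i 0 = i + 1 := by
  rw [incPat_eq_range', List.getD_eq_getElem _ _ (by simpa using h), List.getElem_range']
  omega

/-- an RGF contains the increasing pattern of length r iff its max is at least r -/
lemma contains_incPat_iff {w : List ℕ} (hw : IsRGF w) {r : ℕ} (hr : 1 ≤ r) :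
    PatContains w (incPat r) ↔ r ≤ mx w := by
  constructor
  · rintro ⟨s, hsub, hlen, hiso⟩
    have hslen : s.length = r := by simpa [incPat] using hlen
    have key : ∀ i, i < r → i + 1 ≤ s.getD i 0 := by
      intro i
      induction i with
      | zero =>
        intro h0
        exact hw.1 _ (hsub.subset (getD_mem (by omega)))
      | succ i ih =>
        intro hir
        have h1 : s.getD i 0 < s.getD (i+1) 0 := by
          rw [hiso i (i+1) (by omega) (by omega), incPat_getD (by omega), incPat_getD hir]
          omega
        have := ih (by omega)
        omega
    have : r ≤ s.getD (r-1) 0 := by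
      have := key (r-1) (by omega)
      omega
    calc r ≤ s.getD (r-1) 0 := this
    _ ≤ mx w := le_mx_of_mem (hsub.subset (getD_mem (by omega)))
  · intro h
    refine ⟨List.range' 1 r, ?_, ?_⟩
    · refine List.Sublist.trans ?_ (rgf_range'_sublist hw)
      exact (List.range'_sublist_right).2 h
    · rw [← incPat_eq_range']
      exact wordOrdIso_refl _

lemma rgf_idxOf_mono {τ : List ℕ} (hτ : IsRGF τ) {t : ℕ} (ht1 : 1 ≤ t) (ht : t + 1 ∈ τ) :
    t ∈ τ ∧ τ.idxOf t < τ.idxOf (t + 1) := by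
  induction τ using List.reverseRecOn with
  | nil => simp at ht
  | append_singleton w a ih =>
    rcases isRGF_snoc_iff.1 hτ with ⟨rfl, rfl⟩ | ⟨hw, ha1, ha2⟩
    · simp at ht; omega
    · by_cases hmem : t + 1 ∈ w
      · obtain ⟨h1, h2⟩ := ih hw hmem
        refine ⟨List.mem_append_left _ h1, ?_⟩
        rw [List.idxOf_append_of_mem h1, List.idxOf_append_of_mem hmem]
        exact h2
      · have ha : a = t + 1 := by
          rcases List.mem_append.1 ht with h | h
          · exact absurd h hmem
          · simpa using (List.mem_singleton.1 h).symm
        have htw : t ∈ w := by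
          apply rgf_mem_of_le_mx hw ht1
          omega
        refine ⟨List.mem_append_left _ htw, ?_⟩
        rw [List.idxOf_append_of_mem htw, List.idxOf_append_of_notMem hmem]
        calc List.idxOf t w < w.length := List.idxOf_lt_length_iff.2 htw
        _ ≤ _ := Nat.le_add_right _ _

lemma rgf_getD_idxOf {τ : List ℕ} {t : ℕ} (h : t ∈ τ) :
    τ.getD (τ.idxOf t) 0 = t := by
  rw [List.getD_eq_getElem _ _ (List.idxOf_lt_length_iff.2 h)]
  exact List.getElem_idxOf _

/-- rigidity: a word order-isomorphic to an RGF `τ` with max `m`, whose entries lie in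
`[1,m]`, must equal `τ`. -/
lemma ordiso_rigid {m : ℕ} {s τ : List ℕ} (hτ : IsRGF τ) (hmx : mx τ = m)
    (hs1 : ∀ x ∈ s, 1 ≤ x) (hsm : ∀ x ∈ s, x ≤ m) (hiso : WordOrdIso s τ) : s = τ := by
  obtain ⟨hlen, hcmp⟩ := hiso
  -- positions of first occurrences
  set q : ℕ → ℕ := fun t => τ.idxOf t with hq
  have hmem : ∀ t, 1 ≤ t → t ≤ m → t ∈ τ := fun t h1 h2 => rgf_mem_of_le_mx hτ h1 (by omega)
  have hqlt : ∀ t, 1 ≤ t → t ≤ m → q t < τ.length :=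
    fun t h1 h2 => List.idxOf_lt_length_iff.2 (hmem t h1 h2)
  have hqval : ∀ t, 1 ≤ t → t ≤ m → τ.getD (q t) 0 = t :=
    fun t h1 h2 => rgf_getD_idxOf (hmem t h1 h2)
  have hqmono : ∀ t, 1 ≤ t → t + 1 ≤ m → q t < q (t + 1) :=
    fun t h1 h2 => (rgf_idxOf_mono hτ h1 (hmem (t+1) (by omega) h2)).2
  set c : ℕ → ℕ := fun t => s.getD (q t) 0 with hc
  have hcent : ∀ t, 1 ≤ t → t ≤ m → 1 ≤ c t ∧ c t ≤ m := by
    intro t h1 h2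
    have : c t ∈ s := getD_mem (by rw [hlen]; exact hqlt t h1 h2)
    exact ⟨hs1 _ this, hsm _ this⟩
  have hcmono : ∀ t, 1 ≤ t → t + 1 ≤ m → c t < c (t + 1) := by
    intro t h1 h2
    have := hcmp (q t) (q (t+1)) (by rw [hlen]; exact hqlt t h1 (by omega))
      (by rw [hlen]; exact hqlt (t+1) (by omega) h2)
    rw [hqval t h1 (by omega), hqval (t+1) (by omega) h2] at this
    exact this.2 (by omega)
  -- c t ≥ t
  have hge : ∀ d, 1 + d ≤ m → 1 + d ≤ c (1 + d) := by
    intro d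
    induction d with
    | zero => intro h; exact (hcent 1 le_rfl h).1
    | succ d ih =>
      intro h
      have h1 := ih (by omega)
      have h2 := hcmono (1+d) (by omega) (by omega)
      rw [show 1+(d+1) = (1+d)+1 from by omega]
      omega
  -- c t ≤ t
  have hle : ∀ d, d < m → c (m - d) ≤ m - d := by
    intro d
    induction d with
    | zero => intro h; simpa using (hcent m (by omega) le_rfl).2
    | succ d ih =>
      intro h
      have h1 := ih (by omega)
      have h2 := hcmono (m - (d+1)) (by omega) (by omega)
      have : m - (d+1) + 1 = m - d := by omega
      rw [this] at h2
      omega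
  have hcid : ∀ t, 1 ≤ t → t ≤ m → c t = t := by
    intro t h1 h2
    have g1 := hge (t - 1) (by omega)
    have g2 := hle (m - t) (by omega)
    have e1 : 1 + (t-1) = t := by omega
    have e2 : m - (m - t) = t := by omega
    rw [e1] at g1; rw [e2] at g2; omega
  -- now pointwise equality
  have hpt : ∀ i, i < τ.length → s.getD i 0 = τ.getD i 0 := by
    intro i hi
    set v := τ.getD i 0 with hv
    have hvmem : v ∈ τ := getD_mem hi
    have hv1 : 1 ≤ v := hτ.1 _ hvmem
    have hvm : v ≤ m := by have := le_mx_of_mem hvmem; omega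
    -- τ.getD i = τ.getD (q v), so s.getD i = s.getD (q v) = c v = v
    have hqv : τ.getD (q v) 0 = v := hqval v hv1 hvm
    have h1 := hcmp i (q v) (by omega) (by rw [hlen]; exact hqlt v hv1 hvm)
    have h2 := hcmp (q v) i (by rw [hlen]; exact hqlt v hv1 hvm) (by omega)
    rw [hqv, ← hv] at h1 h2
    have : s.getD i 0 = s.getD (q v) 0 := by omega
    rw [this]
    exact (hcid v hv1 hvm).trans hqv.symm |>.trans hqv
  apply List.ext_getElem (by omega)
  intro i h1 h2
  have := hpt i (by omega)
  rwa [List.getD_eq_getElem s 0 h1, List.getD_eq_getElem τ 0 h2] at this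

/-- among words with entries in [1,m], containing an RGF pattern τ with max m
is the same as containing it as a literal sublist. -/
lemma contains_iff_sublist {m : ℕ} {w τ : List ℕ} (hw : IsRGF w) (hwm : ∀ x ∈ w, x ≤ m)
    (hτ : IsRGF τ) (hmx : mx τ = m) : PatContains w τ ↔ τ.Sublist w := by
  constructor
  · rintro ⟨s, hsub, hiso⟩
    have : s = τ := ordiso_rigid hτ hmx (fun x hx => hw.1 x (hsub.subset hx))
      (fun x hx => hwm x (hsub.subset hx)) hiso
    rwa [this] at hsub
  · intro h
    exact ⟨τ, h, wordOrdIso_refl τ⟩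

/-- number of distinct letters of an RGF is its max -/
lemma rgf_toFinset_card {τ : List ℕ} (hτ : IsRGF τ) : τ.toFinset.card = mx τ := by
  have : τ.toFinset = Finset.Icc 1 (mx τ) := by
    ext x
    simp only [List.mem_toFinset, Finset.mem_Icc]
    constructor
    · intro h; exact ⟨hτ.1 x h, le_mx_of_mem h⟩
    · intro ⟨h1, h2⟩; exact rgf_mem_of_le_mx hτ h1 h2
  rw [this, Nat.card_Icc]
  omega

/-! ### Counting infrastructure -/

lemma ncard_prod {α β : Type*} (s : Set α) (t : Set β) :
    (s ×ˢ t).ncard = s.ncard * t.ncard := by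
  rw [← Nat.card_coe_set_eq, ← Nat.card_coe_set_eq, ← Nat.card_coe_set_eq,
    Nat.card_congr (Equiv.Set.prod s t), Nat.card_prod]

lemma finite_bdd (m n : ℕ) : {w : List ℕ | w.length = n ∧ ∀ x ∈ w, x ≤ m}.Finite := by
  induction n with
  | zero =>
    apply Set.Finite.subset (Set.finite_singleton ([] : List ℕ))
    rintro w ⟨h1, -⟩
    simp [List.length_eq_zero_iff.1 h1]
  | succ n ih =>
    apply Set.Finite.subset (Set.Finite.image (fun p : ℕ × List ℕ => p.1 :: p.2)
      (Set.Finite.prod (Set.finite_Iic m) ih))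
    rintro w ⟨h1, h2⟩
    rcases w with _ | ⟨x, t⟩
    · simp at h1
    · refine ⟨(x, t), ⟨?_, ?_, ?_⟩, rfl⟩
      · exact h2 x (List.mem_cons_self)
      · simpa using h1
      · exact fun y hy => h2 y (List.mem_cons_of_mem _ hy)

lemma take_sublist_take {l : List ℕ} {i j : ℕ} (h : i ≤ j) :
    (l.take i).Sublist (l.take j) := by
  have := List.take_sublist i (l.take j)
  rwa [List.take_take, min_eq_left h] at this

lemma take_one_eq {l : List ℕ} (h : l ≠ []) : l.take 1 = [l.getD 0 0] := by
  rcases l with _ | ⟨x, t⟩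
  · exact absurd rfl h
  · simp

lemma take_succ_eq {l : List ℕ} {i : ℕ} (h : i < l.length) :
    l.take (i + 1) = l.take i ++ [l.getD i 0] := by
  rw [List.take_succ, List.getD_eq_getElem _ _ h]
  congr 1
  simp [List.getElem?_eq_getElem h]

lemma snoc_sublist_snoc {l w : List ℕ} {b a : ℕ} :
    (l ++ [b]).Sublist (w ++ [a]) ↔ (l ++ [b]).Sublist w ∨ (b = a ∧ l.Sublist w) := by
  constructor
  · intro h
    obtain ⟨l₁, l₂, heq, h1, h2⟩ := List.sublist_append_iff.1 h
    rcases List.sublist_singleton.1 h2 with rfl | rfl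
    · left; rw [List.append_nil] at heq; rwa [heq]
    · right
      obtain ⟨rfl, hb⟩ := List.append_inj' heq rfl
      have : b = a := by simpa using hb
      exact ⟨this, h1⟩
  · rintro (h | ⟨rfl, h⟩)
    · exact h.trans (List.sublist_append_left _ _)
    · exact h.append (List.Sublist.refl _)

/-- every entry of an RGF is at most its position (1-based) -/
lemma rgf_getD_le {τ : List ℕ} (hτ : IsRGF τ) : ∀ i, i < τ.length → τ.getD i 0 ≤ i + 1 := by
  intro i
  induction i using Nat.strong_induction_on with
  | _ i ih =>
    intro hi
    rcases Nat.eq_zero_or_pos i with rfl | hpos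
    · have := hτ.2.1 (List.length_pos_iff.1 hi)
      omega
    · obtain ⟨j, rfl⟩ : ∃ j, i = j + 1 := ⟨i - 1, by omega⟩
      have h3 := hτ.2.2 j hi
      have hmx : mx (τ.take (j+1)) ≤ j + 1 := by
        apply mx_le
        intro x hx
        obtain ⟨idx, hidx, hval⟩ := List.mem_iff_getElem.1 hx
        have hlt : idx < j + 1 := by
          have := List.length_take (i := j+1) (l := τ)
          omega
        have hidx' : idx < τ.length := by omega
        have : τ.getD idx 0 = x := by
          rw [List.getD_eq_getElem _ _ hidx', ← hval, List.getElem_take]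
        rw [← this]
        have := ih idx (by omega) hidx'
        omega
      unfold mx at hmx
      omega

/-! ### The class of words and progress sets -/

def Cls (m n : ℕ) : Set (List ℕ) := {w | IsRGF w ∧ (∀ x ∈ w, x ≤ m) ∧ w.length = n}

def Sset (m : ℕ) (τ : List ℕ) (i n : ℕ) : Set (List ℕ) :=
  {w | w ∈ Cls m n ∧ (τ.take i).Sublist w ∧ (i < τ.length → ¬ (τ.take (i+1)).Sublist w)}

lemma finite_cls (m n : ℕ) : (Cls m n).Finite :=
  (finite_bdd m n).subset fun w ⟨_, h2, h3⟩ => ⟨h3, h2⟩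

lemma finite_sset (m : ℕ) (τ : List ℕ) (i n : ℕ) : (Sset m τ i n).Finite :=
  (finite_cls m n).subset fun _ h => h.1

lemma isRGF_snoc_iff' {w : List ℕ} {a : ℕ} :
    IsRGF (w ++ [a]) ↔ IsRGF w ∧ 1 ≤ a ∧ a ≤ mx w + 1 := by
  rw [isRGF_snoc_iff]
  constructor
  · rintro (⟨rfl, rfl⟩ | h)
    · exact ⟨isRGF_nil, le_rfl, by simp [mx]⟩
    · exact h
  · exact fun h => Or.inr h

lemma cls_snoc_iff {m n : ℕ} {w : List ℕ} {a : ℕ} :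
    w ++ [a] ∈ Cls m (n + 1) ↔ w ∈ Cls m n ∧ 1 ≤ a ∧ a ≤ min (mx w + 1) m := by
  simp only [Cls, Set.mem_setOf_eq, isRGF_snoc_iff']
  constructor
  · rintro ⟨⟨h1, h2, h3⟩, h4, h5⟩
    refine ⟨⟨h1, fun x hx => h4 x (by simp [hx]), by simpa using h5⟩, h2, ?_⟩
    simp only [le_min_iff]
    exact ⟨h3, h4 a (by simp)⟩
  · rintro ⟨⟨h1, h2, h3⟩, h4, h5⟩
    simp only [le_min_iff] at h5
    refine ⟨⟨h1, h4, h5.1⟩, ?_, by simp [h3]⟩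
    intro x hx
    rcases List.mem_append.1 hx with hx | hx
    · exact h2 x hx
    · simp at hx; omega

section Main

variable {m k : ℕ} {τ : List ℕ}

lemma take_eq_range' (hm : 2 ≤ m) (hτ : IsRGF τ) (hlen : τ.length = k) (hmx : mx τ = m)
    (hpre : ∀ i, i < m - 1 → τ.getD i 0 = i + 1) {i : ℕ} (hi : i ≤ m - 1) :
    τ.take i = List.range' 1 i := by
  have hk : m ≤ k := by
    have := (rgf_range'_sublist hτ).length_le
    simp [hmx, hlen] at this
    exact this
  apply List.ext_getElem
  · simp [hlen]; omega
  · intro j h1 h2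
    have hjl : j < τ.length := by simp at h1; omega
    have hj : j < i := by simpa using h2
    rw [List.getElem_take, List.getElem_range']
    have := hpre j (by omega)
    rw [List.getD_eq_getElem _ _ hjl] at this
    omega

lemma k_ge_m (hτ : IsRGF τ) (hlen : τ.length = k) (hmx : mx τ = m) : m ≤ k := by
  have := (rgf_range'_sublist hτ).length_le
  simp [hmx, hlen] at this
  exact this

/-- the max of a word in `Sset m τ i n` with `1 ≤ i ≤ m-2` is exactly `i` -/
lemma mx_of_sset_low (hm : 2 ≤ m) (hτ : IsRGF τ) (hlen : τ.length = k) (hmx : mx τ = m)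
    (hpre : ∀ i, i < m - 1 → τ.getD i 0 = i + 1) {i n : ℕ} (hi1 : 1 ≤ i) (hi2 : i ≤ m - 2)
    {w : List ℕ} (hw : w ∈ Sset m τ i n) : mx w = i := by
  have hk := k_ge_m hτ hlen hmx
  obtain ⟨⟨hrgf, hbd, hlw⟩, hsub, hnot⟩ := hw
  rw [take_eq_range' hm hτ hlen hmx hpre (by omega)] at hsub
  have hmem : i ∈ w := hsub.subset (List.mem_range'_1.2 ⟨by omega, by omega⟩)
  have hge : i ≤ mx w := le_mx_of_mem hmem
  by_contra hne
  have hgt : i + 1 ≤ mx w := by omega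
  apply hnot (by omega)
  rw [take_eq_range' hm hτ hlen hmx hpre (by omega)]
  exact (List.range'_sublist_right.2 hgt).trans (rgf_range'_sublist hrgf)

lemma mx_of_sset_high (hm : 2 ≤ m) (hτ : IsRGF τ) (hlen : τ.length = k) (hmx : mx τ = m)
    (hpre : ∀ i, i < m - 1 → τ.getD i 0 = i + 1) {i n : ℕ} (hi1 : m - 1 ≤ i)
    {w : List ℕ} (hw : w ∈ Sset m τ i n) : m - 1 ≤ mx w ∧ mx w ≤ m := by
  obtain ⟨⟨hrgf, hbd, hlw⟩, hsub, hnot⟩ := hw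
  have h1 : (τ.take (m-1)).Sublist w := (take_sublist_take hi1).trans hsub
  rw [take_eq_range' hm hτ hlen hmx hpre le_rfl] at h1
  have hmem : m - 1 ∈ w := h1.subset (List.mem_range'_1.2 ⟨by omega, by omega⟩)
  exact ⟨le_mx_of_mem hmem, mx_le hbd⟩

/-- uniform description of the allowed extension bound on `Sset m τ i n` -/
lemma allowed_uniform (hm : 2 ≤ m) (hτ : IsRGF τ) (hlen : τ.length = k) (hmx : mx τ = m)
    (hpre : ∀ i, i < m - 1 → τ.getD i 0 = i + 1) {i n : ℕ} (hi1 : 1 ≤ i)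
    {w : List ℕ} (hw : w ∈ Sset m τ i n) : min (mx w + 1) m = min (i + 1) m := by
  rcases le_or_gt i (m - 2) with h | h
  · rw [mx_of_sset_low hm hτ hlen hmx hpre hi1 h hw]
  · have := mx_of_sset_high hm hτ hlen hmx hpre (by omega) hw
    omega

end Main

def StayA (m k : ℕ) (τ : List ℕ) (i : ℕ) : Set ℕ :=
  {a | 1 ≤ a ∧ a ≤ min (i+1) m ∧ (i < k → a ≠ τ.getD i 0)}

lemma ncard_set_Icc (a b : ℕ) : (Set.Icc a b).ncard = b + 1 - a := by
  rw [← Finset.coe_Icc, Set.ncard_coe_finset, Nat.card_Icc]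

section Main2

variable {m k : ℕ} {τ : List ℕ}

lemma stayA_finite (m k : ℕ) (τ : List ℕ) (i : ℕ) : (StayA m k τ i).Finite :=
  (Set.finite_Icc 1 (min (i+1) m)).subset fun a ⟨h1, h2, _⟩ => ⟨h1, h2⟩

lemma stayA_ncard (hm : 2 ≤ m) (hτ : IsRGF τ) (hlen : τ.length = k) (hmx : mx τ = m)
    {i : ℕ} (hi1 : 1 ≤ i) (hik : i ≤ k) :
    (StayA m k τ i).ncard = if i = k then m else min i (m-1) := by
  have hk := k_ge_m hτ hlen hmx
  rcases eq_or_lt_of_le hik with heq | hik'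
  · have : StayA m k τ i = Set.Icc 1 m := by
      ext a
      simp only [StayA, Set.mem_setOf_eq, Set.mem_Icc]
      constructor
      · rintro ⟨h1, h2, _⟩; exact ⟨h1, by omega⟩
      · rintro ⟨h1, h2⟩; exact ⟨h1, by omega, fun h => absurd h (by omega)⟩
    rw [this, ncard_set_Icc, if_pos heq]
    omega
  · have hgd1 : 1 ≤ τ.getD i 0 := hτ.1 _ (getD_mem (by omega))
    have hgdm : τ.getD i 0 ≤ m := by
      have := le_mx_of_mem (getD_mem (show i < τ.length by omega))
      omega
    have hgdi : τ.getD i 0 ≤ i + 1 := rgf_getD_le hτ i (by omega)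
    have : StayA m k τ i = Set.Icc 1 (min (i+1) m) \ {τ.getD i 0} := by
      ext a
      simp only [StayA, Set.mem_setOf_eq, Set.mem_diff, Set.mem_Icc, Set.mem_singleton_iff]
      constructor
      · rintro ⟨h1, h2, h3⟩; exact ⟨⟨h1, h2⟩, h3 hik'⟩
      · rintro ⟨⟨h1, h2⟩, h3⟩; exact ⟨h1, h2, fun _ => h3⟩
    rw [this, Set.ncard_diff_singleton_of_mem (s := Set.Icc 1 (min (i+1) m)) (a := τ.getD i 0)
      (by simp only [Set.mem_Icc]; omega), ncard_set_Icc]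
    have : i ≠ k := by omega
    simp [this]
    omega

lemma take_sublist_snoc_iff (hlen : τ.length = k) {i : ℕ} (hi1 : 1 ≤ i) (hik : i ≤ k)
    {w : List ℕ} {a : ℕ} :
    (τ.take i).Sublist (w ++ [a]) ↔
      (τ.take i).Sublist w ∨ (τ.getD (i-1) 0 = a ∧ (τ.take (i-1)).Sublist w) := by
  have h : τ.take i = τ.take (i-1) ++ [τ.getD (i-1) 0] := by
    have := take_succ_eq (l := τ) (i := i-1) (by omega)
    rwa [show i-1+1 = i from by omega] at this
  rw [h, snoc_sublist_snoc, ← h]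

lemma sset_decomp (hm : 2 ≤ m) (hτ : IsRGF τ) (hlen : τ.length = k) (hmx : mx τ = m)
    (hpre : ∀ i, i < m - 1 → τ.getD i 0 = i + 1) {i : ℕ} (hi1 : 1 ≤ i) (hik : i ≤ k) (n : ℕ) :
    Sset m τ i (n+1) =
      ((fun p : List ℕ × ℕ => p.1 ++ [p.2]) '' ((Sset m τ i n) ×ˢ (StayA m k τ i)))
      ∪ ((fun w => w ++ [τ.getD (i-1) 0]) '' (Sset m τ (i-1) n)) := by
  have hk := k_ge_m hτ hlen hmx
  ext w'
  constructor
  · rintro ⟨hcls, hsub, hnot⟩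
    have hw' : w' ≠ [] := by
      intro h
      have := hcls.2.2
      rw [h] at this
      simp at this
    obtain ⟨w, a, rfl⟩ : ∃ w a, w' = w ++ [a] := by
      rcases List.eq_nil_or_concat w' with rfl | ⟨w, a, hw⟩
      · exact absurd rfl hw'
      · exact ⟨w, a, by simpa [List.concat_eq_append] using hw⟩
    obtain ⟨hwc, ha1, ha2⟩ := cls_snoc_iff.1 hcls
    by_cases hyes : (τ.take i).Sublist w
    · left
      have hcond : i < τ.length → ¬ (τ.take (i+1)).Sublist w := by
        intro h1 h2
        exact hnot h1 (h2.trans (List.sublist_append_left _ _))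
      have hwS : w ∈ Sset m τ i n := ⟨hwc, hyes, hcond⟩
      refine ⟨(w, a), ⟨hwS, ha1, ?_, ?_⟩, rfl⟩
      · rwa [allowed_uniform hm hτ hlen hmx hpre hi1 hwS] at ha2
      · intro hik2 hae
        apply hnot (by omega)
        rw [take_sublist_snoc_iff hlen (by omega) (by omega)]
        right
        refine ⟨by simpa using hae.symm, by simpa using hyes⟩
    · right
      rcases (take_sublist_snoc_iff hlen hi1 hik).1 hsub with h | ⟨ha, htk⟩
      · exact absurd h hyes
      · refine ⟨w, ⟨hwc, htk, ?_⟩, by rw [ha]⟩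
        intro _ hcon
        rw [show i-1+1 = i from by omega] at hcon
        exact hyes hcon
  · rintro (⟨⟨w, a⟩, ⟨hwS, ha1, ha2, ha3⟩, rfl⟩ | ⟨w, hwS, rfl⟩)
    · refine ⟨?_, ?_, ?_⟩
      · rw [cls_snoc_iff]
        exact ⟨hwS.1, ha1, by rwa [allowed_uniform hm hτ hlen hmx hpre hi1 hwS]⟩
      · exact hwS.2.1.trans (List.sublist_append_left _ _)
      · intro hik2 hcon
        rcases (take_sublist_snoc_iff hlen (by omega) (by omega)).1 hcon with h | ⟨hae, hti⟩
        · exact hwS.2.2 hik2 h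
        · simp only [Nat.add_sub_cancel] at hae hti
          exact ha3 (by omega) hae.symm
    · have hi1' : i - 1 < τ.length := by omega
      have ha1 : 1 ≤ τ.getD (i-1) 0 := hτ.1 _ (getD_mem hi1')
      have ham : τ.getD (i-1) 0 ≤ m := by
        have := le_mx_of_mem (getD_mem hi1')
        omega
      have hai : τ.getD (i-1) 0 ≤ i := by
        have := rgf_getD_le hτ (i-1) hi1'
        omega
      refine ⟨?_, ?_, ?_⟩
      · rw [cls_snoc_iff]
        refine ⟨hwS.1, ha1, ?_⟩
        rcases eq_or_lt_of_le hi1 with h1 | h1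
        · have : τ.getD (i-1) 0 = 1 := by
            rw [show i - 1 = 0 from by omega]
            exact hpre 0 (by omega)
          omega
        · have := allowed_uniform hm hτ hlen hmx hpre (i := i-1) (by omega) hwS
          have h2 : τ.getD (i-1) 0 ≤ min (i-1+1) m := by omega
          omega
      · rw [take_sublist_snoc_iff hlen hi1 hik]
        exact Or.inr ⟨rfl, hwS.2.1⟩
      · intro hik2 hcon
        have hnoti : ¬ (τ.take i).Sublist w := by
          have := hwS.2.2 (by omega)
          rwa [show i-1+1 = i from by omega] at this
        rcases (take_sublist_snoc_iff hlen (by omega) (by omega)).1 hcon with h | ⟨hae, hti⟩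
        · exact hnoti ((take_sublist_take (by omega)).trans h)
        · simp only [Nat.add_sub_cancel] at hti
          exact hnoti hti

lemma sset_card_rec (hm : 2 ≤ m) (hτ : IsRGF τ) (hlen : τ.length = k) (hmx : mx τ = m)
    (hpre : ∀ i, i < m - 1 → τ.getD i 0 = i + 1) {i : ℕ} (hi1 : 1 ≤ i) (hik : i ≤ k) (n : ℕ) :
    (Sset m τ i (n+1)).ncard =
      (if i = k then m else min i (m-1)) * (Sset m τ i n).ncard + (Sset m τ (i-1) n).ncard := by
  rw [sset_decomp hm hτ hlen hmx hpre hi1 hik n]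
  have hinj : Function.Injective (fun p : List ℕ × ℕ => p.1 ++ [p.2]) := by
    rintro ⟨w, a⟩ ⟨v, b⟩ h
    simp only at h
    obtain ⟨h1, h2⟩ := List.append_inj' h rfl
    simp at h2
    simp [h1, h2]
  have hinj2 : Function.Injective (fun w : List ℕ => w ++ [τ.getD (i-1) 0]) := by
    intro w v h
    simpa using (List.append_inj' h rfl).1
  have hfin1 : ((fun p : List ℕ × ℕ => p.1 ++ [p.2]) '' ((Sset m τ i n) ×ˢ (StayA m k τ i))).Finite :=
    (((finite_sset m τ i n).prod (stayA_finite m k τ i)).image _)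
  have hfin2 : ((fun w : List ℕ => w ++ [τ.getD (i-1) 0]) '' (Sset m τ (i-1) n)).Finite :=
    ((finite_sset m τ (i-1) n).image _)
  have hdisj : Disjoint ((fun p : List ℕ × ℕ => p.1 ++ [p.2]) '' ((Sset m τ i n) ×ˢ (StayA m k τ i)))
      ((fun w : List ℕ => w ++ [τ.getD (i-1) 0]) '' (Sset m τ (i-1) n)) := by
    rw [Set.disjoint_left]
    rintro x ⟨⟨w, a⟩, ⟨hwS, _⟩, rfl⟩ ⟨v, hvS, hveq⟩
    have := (List.append_inj' hveq.symm rfl).1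
    rw [← this] at hvS
    have hnot := hvS.2.2 (by omega)
    rw [show i-1+1 = i from by omega] at hnot
    exact hnot hwS.2.1
  rw [Set.ncard_union_eq hdisj hfin1 hfin2,
    Set.ncard_image_of_injOn (hinj.injOn),
    Set.ncard_image_of_injOn (hinj2.injOn),
    ncard_prod, stayA_ncard hm hτ hlen hmx hi1 hik]
  ring

end Main2

section Base

variable {m k : ℕ} {τ : List ℕ}

lemma sset_len_zero (hlen : τ.length = k) {i : ℕ} (hi : 1 ≤ i) (hik : i ≤ k) :
    Sset m τ i 0 = ∅ := by
  ext w
  simp only [Set.mem_empty_iff_false, iff_false]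
  rintro ⟨⟨_, _, hlw⟩, hsub, -⟩
  have hw : w = [] := List.length_eq_zero_iff.1 hlw
  rw [hw, List.sublist_nil] at hsub
  have : (τ.take i).length = i := by
    rw [List.length_take]
    omega
  rw [hsub] at this
  simp at this
  omega

lemma sset_zero_zero (hm : 2 ≤ m) (hlen : τ.length = k) (hk : m ≤ k)
    (hpre : ∀ i, i < m - 1 → τ.getD i 0 = i + 1) :
    Sset m τ 0 0 = {([] : List ℕ)} := by
  ext w
  simp only [Set.mem_singleton_iff]
  constructor
  · rintro ⟨⟨_, _, hlw⟩, -, -⟩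
    exact List.length_eq_zero_iff.1 hlw
  · rintro rfl
    refine ⟨⟨isRGF_nil, by simp, rfl⟩, by simp, ?_⟩
    intro h1 h2
    rw [List.sublist_nil] at h2
    have : (τ.take 1).length = 1 := by
      rw [List.length_take]; omega
    rw [h2] at this
    simp at this

lemma sset_zero_succ (hm : 2 ≤ m) (hτ : IsRGF τ) (hlen : τ.length = k) (hk : m ≤ k)
    (hpre : ∀ i, i < m - 1 → τ.getD i 0 = i + 1) (n : ℕ) :
    Sset m τ 0 (n+1) = ∅ := by
  ext w
  simp only [Set.mem_empty_iff_false, iff_false]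
  rintro ⟨⟨hrgf, _, hlw⟩, -, hnot⟩
  have hw : w ≠ [] := by
    intro h; rw [h] at hlw; simp at hlw
  apply hnot (by omega)
  have ht1 : τ.take 1 = [1] := by
    rw [take_one_eq (by intro h; rw [h] at hlen; simp at hlen; omega)]
    rw [hpre 0 (by omega)]
  rw [ht1, List.singleton_sublist]
  have h0 : w.getD 0 0 = 1 := hrgf.2.1 hw
  have : w.getD 0 0 ∈ w := getD_mem (by rw [hlw]; omega)
  rwa [h0] at this

end Base

/-! ### Power series -/

open PowerSeries

noncomputable def geomPS (c : ℚ) : PowerSeries ℚ := PowerSeries.mk fun n => c ^ n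

lemma geom_mul (c : ℚ) : (1 - C (R := ℚ) c * X) * geomPS c = 1 := by
  ext n
  rw [sub_mul, one_mul, map_sub]
  cases n with
  | zero =>
    simp [geomPS, PowerSeries.coeff_zero_eq_constantCoeff]
  | succ n =>
    rw [mul_assoc, PowerSeries.coeff_C_mul, PowerSeries.coeff_succ_X_mul]
    simp [geomPS, pow_succ, mul_comm]

lemma inv_one_sub (c : ℚ) : (1 - C (R := ℚ) c * X)⁻¹ = geomPS c := by
  rw [PowerSeries.inv_eq_iff_mul_eq_one]
  · rw [mul_comm]; exact geom_mul c
  · simp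

lemma step_ps {f g : ℕ → ℚ} {c : ℚ} (h0 : f 0 = 0) (hrec : ∀ n, f (n+1) = c * f n + g n) :
    PowerSeries.mk f = X * PowerSeries.mk g * geomPS c := by
  have key : (1 - C (R := ℚ) c * X) * PowerSeries.mk f = X * PowerSeries.mk g := by
    ext n
    cases n with
    | zero =>
      simp [h0]
    | succ n =>
      rw [sub_mul, one_mul, map_sub, mul_assoc, PowerSeries.coeff_C_mul,
        PowerSeries.coeff_succ_X_mul, PowerSeries.coeff_succ_X_mul]
      simp only [PowerSeries.coeff_mk]
      rw [hrec n]
      ring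
  calc PowerSeries.mk f = PowerSeries.mk f * ((1 - C (R := ℚ) c * X) * geomPS c) := by
        rw [geom_mul, mul_one]
  _ = ((1 - C (R := ℚ) c * X) * PowerSeries.mk f) * geomPS c := by ring
  _ = X * PowerSeries.mk g * geomPS c := by rw [key]

section GF

variable {m k : ℕ} {τ : List ℕ}

lemma sset_gf (hm : 2 ≤ m) (hτ : IsRGF τ) (hlen : τ.length = k) (hmx : mx τ = m)
    (hpre : ∀ i, i < m - 1 → τ.getD i 0 = i + 1) :
    ∀ i, i ≤ k → PowerSeries.mk (fun n => ((Sset m τ i n).ncard : ℚ)) =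
      X ^ i * ∏ j ∈ Finset.Icc 1 i,
        geomPS ((if j = k then m else min j (m-1) : ℕ) : ℚ) := by
  have hk := k_ge_m hτ hlen hmx
  intro i
  induction i with
  | zero =>
    intro _
    rw [pow_zero, one_mul, Finset.Icc_eq_empty (by omega), Finset.prod_empty]
    ext n
    cases n with
    | zero =>
      simp [sset_zero_zero hm hlen hk hpre]
    | succ n =>
      rw [PowerSeries.coeff_mk, sset_zero_succ hm hτ hlen hk hpre n]
      simp [PowerSeries.coeff_one]
  | succ i ih =>
    intro hik
    have hrec : ∀ n, ((Sset m τ (i+1) (n+1)).ncard : ℚ) =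
        ((if i+1 = k then m else min (i+1) (m-1) : ℕ) : ℚ) * ((Sset m τ (i+1) n).ncard : ℚ)
          + ((Sset m τ i n).ncard : ℚ) := by
      intro n
      have := sset_card_rec hm hτ hlen hmx hpre (i := i+1) (by omega) hik n
      simp only [Nat.add_sub_cancel] at this
      rw [this]
      push_cast
      ring
    have h0 : ((Sset m τ (i+1) 0).ncard : ℚ) = 0 := by
      rw [sset_len_zero hlen (by omega) hik]
      simp
    rw [step_ps h0 hrec, ih (by omega), Finset.prod_Icc_succ_top (by omega)]
    ring

end GF

open PowerSeries in
/-- Theorem 2.7: generating function for partitions avoiding `12⋯(m+1)` and a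
pattern `τ` of length `k` with `m` blocks whose `i`-th letter is `i` for `i ≤ m-1`. -/
theorem stmt3 (m k : ℕ) (hm : 2 ≤ m) (τ : List ℕ) (hτ : IsRGF τ)
    (hlen : τ.length = k) (hblocks : τ.toFinset.card = m)
    (hpre : ∀ i, i < m - 1 → τ.getD i 0 = i + 1) :
    PowerSeries.mk (fun n => (pCount n {incPat (m + 1), τ} : ℚ))
      = PowerSeries.mk (fun n => (pCount n {incPat (m + 1)} : ℚ))
        - (X : PowerSeries ℚ) ^ k
          * ((1 - C (R := ℚ) ((m : ℚ) - 1) * X)⁻¹) ^ (k - m)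
          * (1 - C (R := ℚ) (m : ℚ) * X)⁻¹
          * ∏ j ∈ Finset.Icc 1 (m - 1), (1 - C (R := ℚ) (j : ℚ) * X)⁻¹ := by
  have hmx : mx τ = m := by
    have := rgf_toFinset_card hτ
    omega
  have hk : m ≤ k := k_ge_m hτ hlen hmx
  have htk : τ.take k = τ := by
    rw [← hlen, List.take_length]
  -- identification of the two pCount sets
  have A1 : ∀ n, {w : List ℕ | IsRGF w ∧ w.length = n ∧
      ∀ p ∈ ({incPat (m+1)} : Set (List ℕ)), PatAvoids w p} = Cls m n := by
    intro n
    ext w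
    simp only [Set.mem_setOf_eq, Set.mem_singleton_iff, forall_eq]
    constructor
    · rintro ⟨h1, h2, h3⟩
      have hbd : mx w ≤ m := by
        by_contra hcon
        exact h3 ((contains_incPat_iff h1 (by omega)).2 (by omega))
      exact ⟨h1, fun x hx => le_trans (le_mx_of_mem hx) hbd, h2⟩
    · rintro ⟨h1, hbd, h2⟩
      refine ⟨h1, h2, fun hcon => ?_⟩
      have := (contains_incPat_iff h1 (by omega)).1 hcon
      have := mx_le hbd
      omega
  have A2 : ∀ n, {w : List ℕ | IsRGF w ∧ w.length = n ∧
      ∀ p ∈ ({incPat (m+1), τ} : Set (List ℕ)), PatAvoids w p}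
      = Cls m n \ Sset m τ k n := by
    intro n
    ext w
    simp only [Set.mem_setOf_eq, Set.mem_insert_iff, Set.mem_singleton_iff, Set.mem_diff]
    constructor
    · rintro ⟨h1, h2, h3⟩
      have hinc : PatAvoids w (incPat (m+1)) := h3 _ (Or.inl rfl)
      have hbd : mx w ≤ m := by
        by_contra hcon
        exact hinc ((contains_incPat_iff h1 (by omega)).2 (by omega))
      have hbd' : ∀ x ∈ w, x ≤ m := fun x hx => le_trans (le_mx_of_mem hx) hbd
      have hτa : PatAvoids w τ := h3 _ (Or.inr rfl)
      refine ⟨⟨h1, hbd', h2⟩, ?_⟩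
      rintro ⟨-, hsub, -⟩
      rw [htk] at hsub
      exact hτa ((contains_iff_sublist h1 hbd' hτ hmx).2 hsub)
    · rintro ⟨⟨h1, hbd, h2⟩, hns⟩
      refine ⟨h1, h2, ?_⟩
      rintro p (rfl | rfl)
      · intro hcon
        have := (contains_incPat_iff h1 (by omega)).1 hcon
        have := mx_le hbd
        omega
      · intro hcon
        have hsub := (contains_iff_sublist h1 hbd hτ hmx).1 hcon
        exact hns ⟨⟨h1, hbd, h2⟩, by rwa [htk], fun hlt => absurd hlt (by omega)⟩
  have hcount : ∀ n, (pCount n {incPat (m+1), τ} : ℚ)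
      = (pCount n {incPat (m+1)} : ℚ) - ((Sset m τ k n).ncard : ℚ) := by
    intro n
    unfold pCount
    rw [A1 n, A2 n]
    have hss : Sset m τ k n ⊆ Cls m n := fun w h => h.1
    rw [Set.ncard_diff hss (finite_sset m τ k n)]
    have hle : (Sset m τ k n).ncard ≤ (Cls m n).ncard :=
      Set.ncard_le_ncard hss (finite_cls m n)
    push_cast [hle]
    ring
  have hsplit : PowerSeries.mk (fun n => (pCount n {incPat (m + 1), τ} : ℚ))
      = PowerSeries.mk (fun n => (pCount n {incPat (m + 1)} : ℚ))
        - PowerSeries.mk (fun n => ((Sset m τ k n).ncard : ℚ)) := by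
    ext n
    simp only [PowerSeries.coeff_mk, map_sub]
    rw [hcount n]
  rw [hsplit]
  congr 1
  -- now the generating function of Sset k
  rw [sset_gf hm hτ hlen hmx hpre k le_rfl]
  -- rewrite the inverses as geometric series
  simp only [inv_one_sub]
  -- split the product
  have hsplit2 : ∏ j ∈ Finset.Icc 1 k,
      geomPS ((if j = k then m else min j (m-1) : ℕ) : ℚ)
      = (∏ j ∈ Finset.Icc 1 (k-1), geomPS ((if j = k then m else min j (m-1) : ℕ) : ℚ))
        * geomPS (m : ℚ) := by
    have hk1 : k = (k-1) + 1 := by omega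
    rw [hk1, Finset.prod_Icc_succ_top (by omega), if_pos rfl, Nat.add_sub_cancel]
  rw [hsplit2]
  have hioc : ∀ x : ℕ, Finset.Icc 1 x = Finset.Ioc 0 x := by
    intro x; ext y; simp [Nat.lt_iff_add_one_le]
  have hsplit3 : ∏ j ∈ Finset.Icc 1 (k-1),
      geomPS ((if j = k then m else min j (m-1) : ℕ) : ℚ)
      = (∏ j ∈ Finset.Icc 1 (m-1), geomPS ((if j = k then m else min j (m-1) : ℕ) : ℚ))
        * ∏ j ∈ Finset.Ioc (m-1) (k-1), geomPS ((if j = k then m else min j (m-1) : ℕ) : ℚ) := by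
    rw [hioc (k-1), hioc (m-1), ← Finset.prod_Ioc_consecutive _ (by omega : 0 ≤ m-1) (by omega : m-1 ≤ k-1)]
  rw [hsplit3]
  have hp1 : ∏ j ∈ Finset.Icc 1 (m-1), geomPS ((if j = k then m else min j (m-1) : ℕ) : ℚ)
      = ∏ j ∈ Finset.Icc 1 (m-1), geomPS (j : ℚ) := by
    apply Finset.prod_congr rfl
    intro j hj
    simp only [Finset.mem_Icc] at hj
    rw [if_neg (by omega), min_eq_left (by omega)]
  have hp2 : ∏ j ∈ Finset.Ioc (m-1) (k-1), geomPS ((if j = k then m else min j (m-1) : ℕ) : ℚ)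
      = geomPS ((m:ℚ) - 1) ^ (k - m) := by
    have hfac : ∀ j ∈ Finset.Ioc (m-1) (k-1),
        geomPS ((if j = k then m else min j (m-1) : ℕ) : ℚ) = geomPS ((m:ℚ) - 1) := by
      intro j hj
      simp only [Finset.mem_Ioc] at hj
      rw [if_neg (by omega), min_eq_right (by omega), Nat.cast_sub (by omega), Nat.cast_one]
    rw [Finset.prod_congr rfl hfac, Finset.prod_const, Nat.card_Ioc]
    congr 1
    omega
  rw [hp1, hp2]
  ring
end

section
/- Fix k ≥ 2. For every n ≥ 1, p_n(122, 1^k) = p_n(122, 12⋯k) = ∑_{i=0}^{k−2} C(n−1, i), where 1^k is the constant pattern of k ones and 12⋯k is the strictly increasing pattern of length k. -/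
namespace Stmt5

def g : List Bool → ℕ → List ℕ
  | [], _ => []
  | true :: b, m => (m+1) :: g b (m+1)
  | false :: b, m => 1 :: g b m

def f (b : List Bool) : List ℕ := 1 :: g b 1

lemma g_length (b : List Bool) (m : ℕ) : (g b m).length = b.length := by
  induction b generalizing m with
  | nil => rfl
  | cons x b ih => cases x <;> simp [g, ih]

lemma g_mem {b : List Bool} {m x : ℕ} (hx : x ∈ g b m) :
    x = 1 ∨ (m + 1 ≤ x ∧ x ≤ m + b.count true) := by
  induction b generalizing m with
  | nil => simp [g] at hx
  | cons c b ih =>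
    cases c with
    | false =>
      simp only [g, List.mem_cons, List.count_cons] at hx ⊢
      rcases hx with rfl | hx
      · left; rfl
      · rcases ih hx with rfl | ⟨h1, h2⟩
        · left; rfl
        · right; constructor <;> [skip; simp] <;> omega
    | true =>
      simp only [g, List.mem_cons, List.count_cons] at hx ⊢
      rcases hx with rfl | hx
      · right; constructor <;> simp
      · rcases ih hx with rfl | ⟨h1, h2⟩
        · left; rfl
        · right; constructor <;> [skip; simp] <;> omega

lemma g_mem_of {b : List Bool} {m x : ℕ} (h1 : m + 1 ≤ x) (h2 : x ≤ m + b.count true) :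
    x ∈ g b m := by
  induction b generalizing m with
  | nil => simp at h2; omega
  | cons c b ih =>
    cases c with
    | false =>
      simp only [List.count_cons] at h2
      simp only [g, List.mem_cons]
      right; exact ih h1 (by simp at h2 ⊢; omega)
    | true =>
      simp only [List.count_cons] at h2
      simp only [g, List.mem_cons]
      rcases Nat.eq_or_lt_of_le h1 with h | h
      · left; omega
      · right; exact ih (by omega) (by simp at h2 ⊢; omega)

lemma g_count_one {b : List Bool} {m : ℕ} (hm : 1 ≤ m) :
    (g b m).count 1 = b.count false := by
  induction b generalizing m with
  | nil => rfl
  | cons c b ih =>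
    cases c with
    | false => simp [g, List.count_cons, ih hm]
    | true =>
      have := ih (m := m + 1) (by omega)
      simp [g, List.count_cons, this]
      omega

lemma g_count_le_one {b : List Bool} {m v : ℕ} (hm : 1 ≤ m) (hv : v ≠ 1) :
    (g b m).count v ≤ 1 := by
  induction b generalizing m with
  | nil => simp [g]
  | cons c b ih =>
    cases c with
    | false =>
      have := ih (m := m) hm
      simp only [g, List.count_cons]
      have h1 : ((1:ℕ) == v) = false := by simp; omega
      simp [h1]; omega
    | true =>
      rcases eq_or_ne v (m+1) with rfl | hne
      · have h0 : (m+1) ∉ g b (m+1) := by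
          intro hmem
          rcases g_mem hmem with h | ⟨h1, _⟩ <;> omega
        simp [g, List.count_cons, List.count_eq_zero.mpr h0]
      · have := ih (m := m + 1) (by omega)
        simp [g, List.count_cons, hne.symm]
        omega

lemma g_max {b : List Bool} {m : ℕ} (hm : 1 ≤ m) :
    max m ((g b m).foldr max 0) = m + b.count true := by
  induction b generalizing m with
  | nil => simp [g]
  | cons c b ih =>
    cases c with
    | false =>
      have := ih (m := m) hm
      simp [g, List.count_cons]
      omega
    | true =>
      have := ih (m := m + 1) (by omega)
      simp [g, List.count_cons]
      omega

lemma g_take (b : List Bool) (m i : ℕ) : g (b.take i) m = (g b m).take i := by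
  induction b generalizing m i with
  | nil => simp [g]
  | cons c b ih =>
    cases i with
    | zero => simp [g]
    | succ i => cases c <;> simp [g, ih]

lemma g_append (b₁ b₂ : List Bool) (m : ℕ) :
    g (b₁ ++ b₂) m = g b₁ m ++ g b₂ (m + b₁.count true) := by
  induction b₁ generalizing m with
  | nil => simp [g]
  | cons c b ih =>
    cases c with
    | false => simp [g, ih, List.count_cons]
    | true =>
      simp [g, ih, List.count_cons]
      rw [show m + (b.count true + 1) = m + 1 + b.count true by omega]

lemma g_inj {b b' : List Bool} {m : ℕ} (hm : 1 ≤ m) (h : g b m = g b' m) : b = b' := by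
  induction b generalizing b' m with
  | nil =>
    cases b' with
    | nil => rfl
    | cons c b' => cases c <;> simp [g] at h
  | cons c b ih =>
    cases b' with
    | nil => cases c <;> simp [g] at h
    | cons c' b' =>
      cases c <;> cases c' <;> simp [g] at h
      · rw [ih hm h]
      · omega
      · omega
      · rw [ih (m := m + 1) (by omega) h]

lemma g_sub (b : List Bool) (m : ℕ) : (List.range' (m+1) (b.count true)).Sublist (g b m) := by
  induction b generalizing m with
  | nil => simp [g]
  | cons c b ih =>
    cases c with
    | false =>
      simpa [g, List.count_cons] using (ih m).cons _
    | true =>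
      simpa [g, List.count_cons, List.range'_succ] using (ih (m+1)).cons₂ (m+1)

lemma g_head {c : List Bool} {M : ℕ} (hc : c ≠ []) :
    (g c M).getD 0 0 = 1 ∨ (g c M).getD 0 0 = M + 1 := by
  cases c with
  | nil => exact absurd rfl hc
  | cons x c => cases x <;> simp [g]

lemma g_nil (m : ℕ) : g [] m = [] := rfl
lemma g_one_def : ∀ (m : ℕ), g [false] m = [1] := fun _ => rfl
lemma g_two_def : ∀ (m : ℕ), g [true] m = [m+1] := fun _ => rfl

lemma f_length (b : List Bool) : (f b).length = b.length + 1 := by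
  simp [f, g_length]

lemma f_mem {b : List Bool} {x : ℕ} (hx : x ∈ f b) : 1 ≤ x := by
  simp only [f, List.mem_cons] at hx
  rcases hx with rfl | hx
  · exact le_refl 1
  · rcases g_mem hx with rfl | ⟨h, _⟩ <;> omega



lemma f_max (b : List Bool) : (f b).foldr max 0 = 1 + b.count true := by
  have := g_max (b := b) (m := 1) le_rfl
  simp only [f, List.foldr_cons]
  omega

lemma f_count_one (b : List Bool) : (f b).count 1 = b.count false + 1 := by
  simp [f, List.count_cons, g_count_one le_rfl]

lemma f_count_le_one {b : List Bool} {v : ℕ} (hv : v ≠ 1) : (f b).count v ≤ 1 := by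
  have := g_count_le_one (b := b) (m := 1) le_rfl hv
  simp [f, List.count_cons, Ne.symm hv, this]

lemma f_take (b : List Bool) (i : ℕ) : (f b).take (i + 1) = f (b.take i) := by
  simp [f, g_take]

lemma f_isRGF (b : List Bool) : IsRGF (f b) := by
  refine ⟨fun x hx => f_mem hx, fun _ => rfl, fun i hi => ?_⟩
  rw [f_take]
  have hmax : ((f (b.take i)).foldr max 0) = 1 + (b.take i).count true := f_max _
  rw [hmax]
  -- bound getD
  have hib : i < b.length := by
    have := f_length b; simp [f, g_length] at hi; omega
  have hdecomp : g b 1 = g (b.take i) 1 ++ g (b.drop i) (1 + (b.take i).count true) := by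
    conv_lhs => rw [← List.take_append_drop i b]
    exact g_append _ _ _
  have hgd : (f b).getD (i + 1) 0 = (g b 1).getD i 0 := by simp [f]
  rw [hgd, hdecomp, List.getD_append_right]
  · have hlen : (g (b.take i) 1).length = i := by
      rw [g_length]; exact List.length_take_of_le (le_of_lt hib)
    rw [hlen, Nat.sub_self]
    set M := 1 + (b.take i).count true with hM
    have hd : b.drop i ≠ [] := by
      intro h
      have := congrArg List.length h
      simp at this; omega
    rcases g_head (M := M) hd with h | h <;> rw [h] <;> omega
  · rw [g_length, List.length_take]
    omega

-- iso helpers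
lemma iso_refl (s : List ℕ) : WordOrdIso s s := ⟨rfl, fun _ _ _ _ => Iff.rfl⟩

lemma getD_replicate {k i : ℕ} (hi : i < k) : (List.replicate k (1:ℕ)).getD i 0 = 1 := by
  rw [List.getD_eq_getElem _ _ (by simpa using hi)]
  simp

lemma incPat_length (k : ℕ) : (incPat k).length = k := by simp [incPat]

lemma getD_incPat {k i : ℕ} (hi : i < k) : (incPat k).getD i 0 = i + 1 := by
  rw [List.getD_eq_getElem _ _ (by simp [incPat]; omega)]
  simp [incPat]

lemma iso_122 {a v : ℕ} (h : a < v) : WordOrdIso [a, v, v] [1, 2, 2] := by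
  refine ⟨rfl, fun i j hi hj => ?_⟩
  simp only [List.length_cons, List.length_nil] at hi hj
  interval_cases i <;> interval_cases j <;> simp [List.getD] <;> omega

lemma f_avoids_122 (b : List Bool) : PatAvoids (f b) [1, 2, 2] := by
  rintro ⟨s, hsub, hlen, hiso⟩
  simp only [List.length_cons, List.length_nil] at hlen
  match s, hlen with
  | [a, v, v'], hlen =>
    have h01 := hiso 0 1 (by simp [hlen]) (by simp [hlen])
    have h12 := hiso 1 2 (by simp [hlen]) (by simp [hlen])
    have h21 := hiso 2 1 (by simp [hlen]) (by simp [hlen])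
    simp [List.getD] at h01 h12 h21
    have hav : a < v := by omega
    have hvv : v = v' := by omega
    subst hvv
    have hv1 : v ≠ 1 := by
      have : 1 ≤ a := f_mem (hsub.subset (by simp))
      omega
    have hcount : (f b).count v ≥ 2 := by
      have := hsub.count_le v
      simp [List.count_cons] at this
      omega
    have := f_count_le_one (b := b) hv1
    omega

lemma contains_replicate_iff {b : List Bool} {k : ℕ} (hk : 2 ≤ k) :
    PatContains (f b) (List.replicate k 1) ↔ k ≤ b.count false + 1 := by
  constructor
  · rintro ⟨s, hsub, hlen, hiso⟩
    rw [List.length_replicate] at hlen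
    -- all entries of s are equal
    have hceq : ∀ i, i < k → s.getD i 0 = s.getD 0 0 := by
      intro i hi
      have h1 := hiso 0 i (by omega) (by omega)
      have h2 := hiso i 0 (by omega) (by omega)
      rw [getD_replicate hi, getD_replicate (by omega : 0 < k)] at h1 h2
      have a1 : ¬ (s.getD 0 0 < s.getD i 0) := fun hh => absurd (h1.mp hh) (lt_irrefl 1)
      have a2 : ¬ (s.getD i 0 < s.getD 0 0) := fun hh => absurd (h2.mp hh) (lt_irrefl 1)
      omega
    have hscount : s.count (s.getD 0 0) = k := by
      rw [← hlen, List.count_eq_length]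
      intro x hx
      obtain ⟨i, hi, hx⟩ := List.getElem_of_mem hx
      rw [← hx, ← List.getD_eq_getElem s 0 hi]
      exact (hceq i (by omega)).symm
    have hcnt : k ≤ (f b).count (s.getD 0 0) := hscount ▸ hsub.count_le _
    rcases eq_or_ne (s.getD 0 0) 1 with hc1 | hc1
    · rw [hc1, f_count_one] at hcnt; omega
    · have := f_count_le_one (b := b) hc1; omega
  · intro h
    refine ⟨List.replicate k 1, ?_, iso_refl _⟩
    rw [List.replicate_sublist_iff, f_count_one]
    omega

lemma contains_inc_iff {b : List Bool} {k : ℕ} :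
    PatContains (f b) (incPat k) ↔ k ≤ b.count true + 1 := by
  constructor
  · rintro ⟨s, hsub, hlen, hiso⟩
    rw [incPat_length] at hlen
    have hpair : s.Pairwise (· < ·) := by
      rw [List.pairwise_iff_getElem]
      intro i j hi hj hij
      rw [← List.getD_eq_getElem s 0 hi, ← List.getD_eq_getElem s 0 hj]
      rw [hlen] at hi hj
      have := hiso i j (by omega) (by omega)
      rw [getD_incPat hi, getD_incPat hj] at this
      exact this.mpr (by omega)
    have hnd : s.Nodup := hpair.imp (fun h => ne_of_lt h)
    have hsubF : s.toFinset ⊆ Finset.Icc 1 (1 + b.count true) := by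
      intro x hx
      rw [List.mem_toFinset] at hx
      have hmem : x = 1 ∨ x ∈ g b 1 := by simpa [f] using hsub.subset hx
      rw [Finset.mem_Icc]
      rcases hmem with rfl | hmem
      · omega
      · rcases g_mem hmem with rfl | ⟨h1, h2⟩ <;> omega
    have := Finset.card_le_card hsubF
    rw [List.toFinset_card_of_nodup hnd, hlen, Nat.card_Icc] at this
    omega
  · intro h
    refine ⟨List.range' 1 k, ?_, ?_⟩
    · have h1 : (List.range' 1 k).Sublist (List.range' 1 (b.count true + 1)) := by
        rw [List.range'_sublist_right]; omega
      have h2 : (List.range' 1 (b.count true + 1)).Sublist (f b) := by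
        rw [List.range'_succ]
        exact (g_sub b 1).cons₂ 1
      exact h1.trans h2
    · refine ⟨by simp [incPat_length], fun i j hi hj => ?_⟩
      simp only [List.length_range'] at hi hj
      have hgi : (List.range' 1 k).getD i 0 = 1 + i := by
        rw [List.getD_eq_getElem _ _ (by simpa using hi)]; simp
      have hgj : (List.range' 1 k).getD j 0 = 1 + j := by
        rw [List.getD_eq_getElem _ _ (by simpa using hj)]; simp
      rw [hgi, hgj, getD_incPat hi, getD_incPat hj]
      omega


lemma f_injective : Function.Injective f := by
  intro b b' h
  simp only [f, List.cons.injEq, true_and] at h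
  exact g_inj le_rfl h

lemma isRGF_snoc {u : List ℕ} {x : ℕ} (h : IsRGF (u ++ [x])) (hu : u ≠ []) :
    IsRGF u ∧ 1 ≤ x ∧ x ≤ u.foldr max 0 + 1 := by
  obtain ⟨h1, h2, h3⟩ := h
  have hul : 1 ≤ u.length := List.length_pos_iff.mpr hu
  refine ⟨⟨fun y hy => h1 y (List.mem_append_left _ hy), fun _ => ?_, fun i hi => ?_⟩,
    h1 x (List.mem_append_right _ (List.mem_singleton_self x)), ?_⟩
  · rw [← List.getD_append u [x] 0 0 (by omega)]
    exact h2 (by simp)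
  · have hlt : i + 1 < (u ++ [x]).length := by simp; omega
    have := h3 i hlt
    rwa [List.getD_append u [x] 0 (i+1) (by omega),
      List.take_append_of_le_length (by omega)] at this
  · have hlt : (u.length - 1) + 1 < (u ++ [x]).length := by simp; omega
    have := h3 (u.length - 1) hlt
    rw [show u.length - 1 + 1 = u.length by omega] at this
    rwa [List.getD_append_right u [x] 0 u.length le_rfl, Nat.sub_self,
      List.take_append_of_le_length le_rfl, List.take_length] at this

lemma contains_of_sublist {w w' p : List ℕ} (hsub : w'.Sublist w) (h : PatContains w' p) :
    PatContains w p := by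
  obtain ⟨s, hs, hiso⟩ := h
  exact ⟨s, hs.trans hsub, hiso⟩

lemma exists_b {w : List ℕ} (hw : IsRGF w) (hne : w ≠ []) (hav : PatAvoids w [1,2,2]) :
    ∃ b : List Bool, w = f b := by
  induction w using List.reverseRecOn with
  | nil => exact absurd rfl hne
  | append_singleton u x ih =>
    rcases eq_or_ne u [] with rfl | hu
    · refine ⟨[], ?_⟩
      have := hw.2.1 (by simp)
      simp at this
      simp [f, this, g_nil]
    · obtain ⟨hru, hx1, hxle⟩ := isRGF_snoc hw hu
      have hav' : PatAvoids u [1,2,2] := fun hc => hav (contains_of_sublist (by simp) hc)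
      obtain ⟨b, rfl⟩ := ih hru hu hav'
      rw [f_max] at hxle
      rcases eq_or_lt_of_le hx1 with hx | hx2
      · refine ⟨b ++ [false], ?_⟩
        simp [f, g_append, g_one_def, ← hx]
      · -- x ≥ 2
        rcases eq_or_lt_of_le hxle with hx | hxlt
        · refine ⟨b ++ [true], ?_⟩
          have hcnt : 1 + b.count true = (f b).foldr max 0 := (f_max b).symm
          simp [f, g_append, g_two_def, hx]
          try omega
        · -- 2 ≤ x ≤ 1 + count true b : contradiction with avoiding 122
          exfalso
          apply hav
          have hxmem : x ∈ g b 1 := g_mem_of (by omega) (by omega)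
          have hsub : [1, x, x].Sublist (f b ++ [x]) := by
            have h1 : [1, x].Sublist (f b) :=
              (List.singleton_sublist.mpr hxmem).cons₂ 1
            have := h1.append (List.Sublist.refl [x])
            simpa using this
          exact ⟨[1, x, x], hsub, iso_122 (by omega)⟩

-- Counting infrastructure
def allB : ℕ → Finset (List Bool)
  | 0 => {[]}
  | m+1 => (allB m).image (true :: ·) ∪ (allB m).image (false :: ·)

lemma mem_allB {m : ℕ} {b : List Bool} : b ∈ allB m ↔ b.length = m := by
  induction m generalizing b with
  | zero => simp [allB, List.length_eq_zero_iff]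
  | succ m ih =>
    simp only [allB, Finset.mem_union, Finset.mem_image]
    constructor
    · rintro (⟨c, hc, rfl⟩ | ⟨c, hc, rfl⟩) <;> simp [ih.mp hc]
    · intro h
      cases b with
      | nil => simp at h
      | cons x c =>
        simp at h
        cases x
        · right; exact ⟨c, ih.mpr h, rfl⟩
        · left; exact ⟨c, ih.mpr h, rfl⟩

lemma cons_inj (x : Bool) : Function.Injective (x :: · : List Bool → List Bool) :=
  fun _ _ h => by simpa using h

lemma count_filter_card (m j : ℕ) (a : Bool) :
    ((allB m).filter (fun b => b.count a = j)).card = Nat.choose m j := by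
  induction m generalizing j with
  | zero =>
    cases j with
    | zero =>
      rw [show allB 0 = {[]} from rfl, Finset.filter_singleton]
      simp
    | succ j =>
      rw [show allB 0 = {[]} from rfl, Finset.filter_singleton]
      simp
  | succ m ih =>
    have hdisj : Disjoint ((allB m).image (true :: ·)) ((allB m).image (false :: ·)) := by
      rw [Finset.disjoint_left]
      rintro b hb hb'
      simp only [Finset.mem_image] at hb hb'
      obtain ⟨c, _, rfl⟩ := hb
      obtain ⟨c', _, h⟩ := hb'
      simp at h
    rw [show allB (m+1) = (allB m).image (true :: ·) ∪ (allB m).image (false :: ·) from rfl,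
      Finset.filter_union, Finset.card_union_of_disjoint
        (Finset.disjoint_filter_filter hdisj),
      Finset.filter_image, Finset.filter_image,
      Finset.card_image_of_injective _ (cons_inj true),
      Finset.card_image_of_injective _ (cons_inj false)]
    cases a
    · -- counting false
      cases j with
      | zero =>
        have h1 : (Finset.filter (fun c => (true :: c).count false = 0) (allB m))
            = Finset.filter (fun c => c.count false = 0) (allB m) := by
          apply Finset.filter_congr; intro c _; simp [List.count_cons]
        have h2 : (Finset.filter (fun c => (false :: c).count false = 0) (allB m)) = ∅ := by
          rw [Finset.filter_eq_empty_iff]; intro c _; simp [List.count_cons]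
        rw [h1, h2, ih, Finset.card_empty]
        simp
      | succ j =>
        have h1 : (Finset.filter (fun c => (true :: c).count false = j + 1) (allB m))
            = Finset.filter (fun c => c.count false = j + 1) (allB m) := by
          apply Finset.filter_congr; intro c _; simp [List.count_cons]
        have h2 : (Finset.filter (fun c => (false :: c).count false = j + 1) (allB m))
            = Finset.filter (fun c => c.count false = j) (allB m) := by
          apply Finset.filter_congr; intro c _; simp [List.count_cons]
        rw [h1, h2, ih, ih]
        simp only [Nat.succ_eq_add_one, Nat.choose_succ_succ]
        omega
    · -- counting true
      cases j with
      | zero =>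
        have h1 : (Finset.filter (fun c => (true :: c).count true = 0) (allB m)) = ∅ := by
          rw [Finset.filter_eq_empty_iff]; intro c _; simp [List.count_cons]
        have h2 : (Finset.filter (fun c => (false :: c).count true = 0) (allB m))
            = Finset.filter (fun c => c.count true = 0) (allB m) := by
          apply Finset.filter_congr; intro c _; simp [List.count_cons]
        rw [h1, h2, ih, Finset.card_empty]
        simp
      | succ j =>
        have h1 : (Finset.filter (fun c => (true :: c).count true = j + 1) (allB m))
            = Finset.filter (fun c => c.count true = j) (allB m) := by
          apply Finset.filter_congr; intro c _; simp [List.count_cons]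
        have h2 : (Finset.filter (fun c => (false :: c).count true = j + 1) (allB m))
            = Finset.filter (fun c => c.count true = j + 1) (allB m) := by
          apply Finset.filter_congr; intro c _; simp [List.count_cons]
        rw [h1, h2, ih, ih]
        simp only [Nat.succ_eq_add_one, Nat.choose_succ_succ]
        try omega

lemma count_le_filter_card (m c : ℕ) (a : Bool) :
    ((allB m).filter (fun b => b.count a ≤ c)).card
      = ∑ j ∈ Finset.range (c+1), Nat.choose m j := by
  rw [Finset.card_eq_sum_card_fiberwise
    (f := fun b => b.count a) (t := Finset.range (c+1))
    (fun b hb => by simp at hb ⊢; omega)]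
  apply Finset.sum_congr rfl
  intro j hj
  simp only [Finset.mem_range] at hj
  rw [← count_filter_card m j a]
  congr 1
  ext b
  simp only [Finset.mem_filter]
  constructor
  · rintro ⟨⟨h1, h2⟩, h3⟩; exact ⟨h1, h3⟩
  · rintro ⟨h1, h2⟩; exact ⟨⟨h1, by omega⟩, h2⟩


open Stmt5 in
lemma set_eq (n : ℕ) (hn : 1 ≤ n) (τ : List ℕ) (q : List Bool → Prop) [DecidablePred q]
    (hq : ∀ b : List Bool, PatContains (f b) τ ↔ ¬ q b) :
    {w : List ℕ | IsRGF w ∧ w.length = n ∧ PatAvoids w [1,2,2] ∧ PatAvoids w τ}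
      = f '' ↑((allB (n-1)).filter q) := by
  ext w
  simp only [Set.mem_setOf_eq, Set.mem_image, Finset.coe_filter, Set.mem_setOf_eq,
    mem_allB]
  constructor
  · rintro ⟨hrgf, hlen, hav1, hav2⟩
    have hne : w ≠ [] := by intro h; rw [h] at hlen; simp at hlen; omega
    obtain ⟨b, rfl⟩ := exists_b hrgf hne hav1
    refine ⟨b, ⟨?_, ?_⟩, rfl⟩
    · have := f_length b; omega
    · by_contra hqb
      exact hav2 ((hq b).mpr hqb)
  · rintro ⟨b, ⟨hblen, hqb⟩, rfl⟩
    refine ⟨f_isRGF b, by rw [f_length]; omega, f_avoids_122 b, fun hc => ?_⟩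
    exact ((hq b).mp hc) hqb

lemma pCount_eq (n : ℕ) (hn : 1 ≤ n) (τ : List ℕ) (q : List Bool → Prop) [DecidablePred q]
    (hq : ∀ b : List Bool, PatContains (f b) τ ↔ ¬ q b) :
    pCount n {[1,2,2], τ} = ((allB (n-1)).filter q).card := by
  have hset : {w : List ℕ | IsRGF w ∧ w.length = n ∧
      ∀ p ∈ ({[1,2,2], τ} : Set (List ℕ)), PatAvoids w p}
      = {w : List ℕ | IsRGF w ∧ w.length = n ∧ PatAvoids w [1,2,2] ∧ PatAvoids w τ} := by
    ext w
    simp only [Set.mem_setOf_eq, Set.mem_insert_iff, Set.mem_singleton_iff,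
      forall_eq_or_imp, forall_eq]
  rw [pCount, hset, set_eq n hn τ q hq, Set.ncard_image_of_injective _ f_injective,
    Set.ncard_coe_finset]


end Stmt5

open Stmt5 in
/-- Proposition 2.14 -/
theorem stmt5 (k : ℕ) (hk : 2 ≤ k) :
    ∀ n : ℕ, 1 ≤ n →
      pCount n {[1,2,2], List.replicate k 1} = pCount n {[1,2,2], incPat k} ∧
      pCount n {[1,2,2], List.replicate k 1}
        = ∑ i ∈ Finset.range (k - 1), Nat.choose (n - 1) i := by
  intro n hn
  have h1 : pCount n {[1,2,2], List.replicate k 1}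
      = ((allB (n-1)).filter (fun b => b.count false ≤ k - 2)).card := by
    apply pCount_eq n hn
    intro b
    rw [contains_replicate_iff hk]
    omega
  have h2 : pCount n {[1,2,2], incPat k}
      = ((allB (n-1)).filter (fun b => b.count true ≤ k - 2)).card := by
    apply pCount_eq n hn
    intro b
    rw [contains_inc_iff]
    omega
  have h1' := count_le_filter_card (n-1) (k-2) false
  have h2' := count_le_filter_card (n-1) (k-2) true
  have hk2 : k - 2 + 1 = k - 1 := by omega
  rw [hk2] at h1' h2'
  refine ⟨?_, by rw [h1, h1']⟩
  rw [h1, h2, h1', h2']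
end

section
/- Let σ be a connected non-crossing RGF, and let τ be a non-crossing RGF of the form 1[ρ] for some RGF ρ (i.e., the letter 1 occurs exactly once in τ, at the first position). Suppose that for every n the number of non-crossing RGFs of length n avoiding σ equals the number of non-crossing RGFs of length n avoiding τ. Then for every n, the number of non-crossing RGFs of length n avoiding 1[σ] equals the number of non-crossing RGFs of length n avoiding τ1 = 1[ρ]1 (the pattern τ with an additional letter 1 appended at the end). -/
/-- A word is non-crossing if it avoids the pattern 1212. -/
def NonCrossing (w : List ℕ) : Prop := PatAvoids w [1,2,1,2]

/-- The number of distinct letters of an RGF equals its maximum letter. -/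
def nLetters (w : List ℕ) : ℕ := w.foldr max 0

/-- `rgfComp a b` is the pattern `a[b]`: `a` followed by `b` shifted up by the
number of distinct letters of `a`. -/
def rgfComp (a b : List ℕ) : List ℕ := a ++ b.map (· + nLetters a)

/-- A connected RGF: nonempty and not expressible as `σ[τ]` with `σ, τ` nonempty RGFs. -/
def Connected (w : List ℕ) : Prop :=
  w ≠ [] ∧ ¬ ∃ a b : List ℕ, IsRGF a ∧ IsRGF b ∧ a ≠ [] ∧ b ≠ [] ∧ w = rgfComp a b

/-- `w` decomposes as `σ₁[σ₂]⋯[σ_p]` with each `σ_i` a connected RGF. -/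
def HasComponents (w : List ℕ) (p : ℕ) : Prop :=
  ∃ l : List (List ℕ), l.length = p ∧ (∀ c ∈ l, IsRGF c ∧ Connected c) ∧
    w = l.foldr rgfComp []

/-- Number of non-crossing RGFs of length `n` with `p` components avoiding `σ`. -/
noncomputable def ncCount (n p : ℕ) (σ : List ℕ) : ℕ :=
  {w : List ℕ | IsRGF w ∧ NonCrossing w ∧ w.length = n ∧ PatAvoids w σ ∧
    HasComponents w p}.ncard

/-- cc-equivalence of patterns. -/
def ccEquiv (σ τ : List ℕ) : Prop := ∀ n p : ℕ, ncCount n p σ = ncCount n p τ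

/-- Number of non-crossing RGFs of length `n` avoiding `σ`. -/
noncomputable def ncAvoidCount (n : ℕ) (σ : List ℕ) : ℕ :=
  {w : List ℕ | IsRGF w ∧ NonCrossing w ∧ w.length = n ∧ PatAvoids w σ}.ncard

/-- Auxiliary: builds `1[σ₁]1[σ₂]⋯1[σ_k]1` with accumulated letter shift `s`. -/
def onePatAux : ℕ → List (List ℕ) → List ℕ
  | _, [] => [1]
  | s, c :: rest => 1 :: (c.map (· + s) ++ onePatAux (s + nLetters c) rest)

/-- The pattern `1[σ₁]1[σ₂]⋯1[σ_k]1`. -/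
def onePat (l : List (List ℕ)) : List ℕ := onePatAux 1 l

/-- The pattern `1[σ]1[τ]`. -/
def pat2 (σ τ : List ℕ) : List ℕ :=
  1 :: (σ.map (· + 1) ++ 1 :: τ.map (· + (1 + nLetters σ)))

namespace Aux

/-! ### foldr max basics -/

lemma le_fold {x : ℕ} {l : List ℕ} (h : x ∈ l) : x ≤ l.foldr max 0 := by
  induction l with
  | nil => simp at h
  | cons a t ih =>
    rcases List.mem_cons.1 h with rfl | h
    · exact le_max_left _ _
    · exact le_trans (ih h) (le_max_right _ _)

lemma fold_mem {l : List ℕ} (hne : l ≠ []) (h1 : ∀ x ∈ l, 1 ≤ x) :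
    l.foldr max 0 ∈ l := by
  induction l with
  | nil => simp at hne
  | cons a t ih =>
    rcases eq_or_ne t [] with rfl | ht
    · simp
    · have := ih ht (fun x hx => h1 x (List.mem_cons_of_mem _ hx))
      rcases max_cases a (t.foldr max 0) with ⟨he, _⟩ | ⟨he, _⟩
      · simp [List.foldr_cons, he]
      · simp only [List.foldr_cons, he]
        exact List.mem_cons_of_mem _ this

lemma fold_le {l : List ℕ} {B : ℕ} (h : ∀ x ∈ l, x ≤ B) : l.foldr max 0 ≤ B := by
  induction l with
  | nil => simp
  | cons a t ih =>
    simp only [List.foldr_cons, max_le_iff]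
    exact ⟨h a (by simp), ih fun x hx => h x (List.mem_cons_of_mem _ hx)⟩

lemma fold_append (l1 l2 : List ℕ) :
    (l1 ++ l2).foldr max 0 = max (l1.foldr max 0) (l2.foldr max 0) := by
  induction l1 with
  | nil => simp
  | cons a t ih => simp [ih, max_assoc]

lemma fold_map_add {l : List ℕ} (hne : l ≠ []) (c : ℕ) :
    (l.map (· + c)).foldr max 0 = l.foldr max 0 + c := by
  induction l with
  | nil => simp at hne
  | cons a t ih =>
    rcases eq_or_ne t [] with rfl | ht
    · simp
    · simp only [List.map_cons, List.foldr_cons, ih ht]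
      exact max_add_add_right a _ c

lemma nLetters_append_one (v : List ℕ) :
    nLetters (v ++ [1]) = max (nLetters v) 1 := by
  simp only [nLetters, fold_append]
  simp

/-! ### WordOrdIso basics -/

lemma iso_length {s t : List ℕ} (h : WordOrdIso s t) : s.length = t.length := h.1

lemma iso_lt {s t : List ℕ} (h : WordOrdIso s t) {i j : ℕ}
    (hi : i < s.length) (hj : j < s.length) :
    s.getD i 0 < s.getD j 0 ↔ t.getD i 0 < t.getD j 0 := h.2 i j hi hj

lemma iso_eq {s t : List ℕ} (h : WordOrdIso s t) {i j : ℕ}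
    (hi : i < s.length) (hj : j < s.length) :
    s.getD i 0 = s.getD j 0 ↔ t.getD i 0 = t.getD j 0 := by
  have h1 := h.2 i j hi hj
  have h2 := h.2 j i hj hi
  omega

/-- shift invariance on the left word -/
lemma iso_map_add_left {s t : List ℕ} (c : ℕ) :
    WordOrdIso (s.map (· + c)) t ↔ WordOrdIso s t := by
  have hg : ∀ i, i < s.length → (s.map (· + c)).getD i 0 = s.getD i 0 + c := by
    intro i hi
    rw [List.getD_eq_getElem _ _ (by simpa using hi), List.getD_eq_getElem _ _ hi,
      List.getElem_map]
  constructor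
  · rintro ⟨hl, h⟩
    refine ⟨by simpa using hl, fun i j hi hj => ?_⟩
    have := h i j (by simpa using hi) (by simpa using hj)
    rwa [hg i hi, hg j hj, add_lt_add_iff_right] at this
  · rintro ⟨hl, h⟩
    refine ⟨by simpa using hl, fun i j hi hj => ?_⟩
    rw [hg i (by simpa using hi), hg j (by simpa using hj), add_lt_add_iff_right]
    exact h i j (by simpa using hi) (by simpa using hj)

lemma iso_map_add_right {s t : List ℕ} (c : ℕ) :
    WordOrdIso s (t.map (· + c)) ↔ WordOrdIso s t := by
  have hg : ∀ i, i < t.length → (t.map (· + c)).getD i 0 = t.getD i 0 + c := by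
    intro i hi
    rw [List.getD_eq_getElem _ _ (by simpa using hi), List.getD_eq_getElem _ _ hi,
      List.getElem_map]
  constructor
  · rintro ⟨hl, h⟩
    have hl' : s.length = t.length := by simpa using hl
    refine ⟨hl', fun i j hi hj => ?_⟩
    rw [h i j hi hj, hg i (hl' ▸ hi), hg j (hl' ▸ hj), add_lt_add_iff_right]
  · rintro ⟨hl, h⟩
    refine ⟨by simpa using hl, fun i j hi hj => ?_⟩
    rw [h i j hi hj, hg i (hl ▸ hi), hg j (hl ▸ hj), add_lt_add_iff_right]

lemma patContains_map_add_iff {w p : List ℕ} (c : ℕ) :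
    PatContains (w.map (· + c)) p ↔ PatContains w p := by
  constructor
  · rintro ⟨s, hs, hiso⟩
    obtain ⟨s', hs', rfl⟩ := List.sublist_map_iff.1 hs
    exact ⟨s', hs', (iso_map_add_left c).1 hiso⟩
  · rintro ⟨s, hs, hiso⟩
    exact ⟨s.map (· + c), hs.map _, (iso_map_add_left c).2 hiso⟩

def Rel : ℕ × ℕ → ℕ × ℕ → Prop :=
  fun p q => (p.1 < q.1 ↔ p.2 < q.2) ∧ (q.1 < p.1 ↔ q.2 < p.2)

lemma iso_iff_zip {s t : List ℕ} :
    WordOrdIso s t ↔ s.length = t.length ∧ (s.zip t).Pairwise Rel := by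
  constructor
  · rintro ⟨hl, h⟩
    refine ⟨hl, List.pairwise_iff_getElem.2 fun i j hi hj hij => ?_⟩
    rw [List.length_zip, hl, min_self] at hi hj
    have hi' : i < s.length := hl ▸ hi
    have hj' : j < s.length := hl ▸ hj
    have g1 := h i j hi' hj'
    have g2 := h j i hj' hi'
    rw [List.getD_eq_getElem _ _ hi', List.getD_eq_getElem _ _ hj',
      List.getD_eq_getElem _ _ (hl ▸ hi'), List.getD_eq_getElem _ _ (hl ▸ hj')] at g1
    rw [List.getD_eq_getElem _ _ hj', List.getD_eq_getElem _ _ hi',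
      List.getD_eq_getElem _ _ (hl ▸ hj'), List.getD_eq_getElem _ _ (hl ▸ hi')] at g2
    constructor <;> simp only [List.getElem_zip] <;> assumption
  · rintro ⟨hl, h⟩
    refine ⟨hl, fun i j hi hj => ?_⟩
    rw [List.getD_eq_getElem _ _ hi, List.getD_eq_getElem _ _ hj,
      List.getD_eq_getElem _ _ (hl ▸ hi), List.getD_eq_getElem _ _ (hl ▸ hj)]
    have hzl : (s.zip t).length = s.length := by rw [List.length_zip, hl, min_self]
    rcases lt_trichotomy i j with hij | rfl | hij
    · have := List.pairwise_iff_getElem.1 h i j (hzl ▸ hi) (hzl ▸ hj) hij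
      simp only [List.getElem_zip] at this
      exact this.1
    · simp
    · have := List.pairwise_iff_getElem.1 h j i (hzl ▸ hj) (hzl ▸ hi) hij
      simp only [List.getElem_zip] at this
      exact this.2

lemma iso_one_cons {s m : List ℕ} (hm : ∀ y ∈ m, 2 ≤ y) :
    WordOrdIso s (1 :: m) ↔
      ∃ a s', s = a :: s' ∧ (∀ x ∈ s', a < x) ∧ WordOrdIso s' m := by
  constructor
  · intro h
    have hl := h.1
    rcases s with _ | ⟨a, s'⟩
    · simp at hl
    refine ⟨a, s', rfl, ?_, ?_⟩
    · have hz := (iso_iff_zip.1 h).2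
      rw [List.zip_cons_cons, List.pairwise_cons] at hz
      intro x hx
      have hl' : s'.length = m.length := by simpa using hl
      obtain ⟨i, hi, rfl⟩ := List.mem_iff_getElem.1 hx
      have hmem : (s'[i], m[i]'(hl' ▸ hi)) ∈ s'.zip m := by
        rw [List.mem_iff_getElem]
        exact ⟨i, by rw [List.length_zip, hl', min_self]; exact hl' ▸ hi, List.getElem_zip⟩
      have := hz.1 _ hmem
      have h2 : 2 ≤ m[i]'(hl' ▸ hi) := hm _ (List.getElem_mem _)
      rcases this with ⟨h3, _⟩
      exact h3.2 (by omega)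
    · have hz := (iso_iff_zip.1 h).2
      rw [List.zip_cons_cons, List.pairwise_cons] at hz
      exact iso_iff_zip.2 ⟨by simpa using hl, hz.2⟩
  · rintro ⟨a, s', rfl, hgt, hiso⟩
    have hl' : s'.length = m.length := hiso.1
    rw [iso_iff_zip, List.zip_cons_cons]
    refine ⟨by simp [hl'], List.pairwise_cons.2 ⟨?_, (iso_iff_zip.1 hiso).2⟩⟩
    rintro ⟨x, y⟩ hmem
    obtain ⟨hx, hy⟩ := List.of_mem_zip hmem
    have := hgt x hx
    have := hm y hy
    exact ⟨by omega, by omega⟩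

lemma iso_one_cons_one {s m : List ℕ} (hm : ∀ y ∈ m, 2 ≤ y) :
    WordOrdIso s (1 :: (m ++ [1])) ↔
      ∃ a s', s = a :: (s' ++ [a]) ∧ (∀ x ∈ s', a < x) ∧ WordOrdIso s' m := by
  constructor
  · intro h
    have hl := h.1
    rcases s with _ | ⟨a, rest⟩
    · simp at hl
    have hlr : rest.length = m.length + 1 := by simpa using hl
    have hrne : rest ≠ [] := by intro hh; rw [hh] at hlr; simp at hlr
    obtain ⟨s', b, rfl⟩ : ∃ s' b, rest = s' ++ [b] :=
      ⟨rest.dropLast, rest.getLast hrne, (List.dropLast_append_getLast hrne).symm⟩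
    have hls : s'.length = m.length := by simpa using hlr
    have hz := (iso_iff_zip.1 h).2
    rw [List.zip_cons_cons, List.zip_append hls, List.pairwise_cons] at hz
    have hzb := hz.1 (b, 1) (by simp)
    have hab : a = b := by
      rcases hzb with ⟨h1, h2⟩; simp at h1 h2; omega
    subst hab
    refine ⟨a, s', rfl, ?_, ?_⟩
    · intro x hx
      obtain ⟨i, hi, rfl⟩ := List.mem_iff_getElem.1 hx
      have hmem : (s'[i], m[i]'(hls ▸ hi)) ∈ s'.zip m := by
        rw [List.mem_iff_getElem]
        exact ⟨i, by rw [List.length_zip, hls, min_self]; exact hls ▸ hi, List.getElem_zip⟩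
      have := hz.1 _ (List.mem_append_left _ hmem)
      have h2 : 2 ≤ m[i]'(hls ▸ hi) := hm _ (List.getElem_mem _)
      rcases this with ⟨h3, _⟩
      exact h3.2 (by omega)
    · have := (List.pairwise_append.1 hz.2).1
      exact iso_iff_zip.2 ⟨hls, this⟩
  · rintro ⟨a, s', rfl, hgt, hiso⟩
    have hls : s'.length = m.length := hiso.1
    rw [iso_iff_zip, List.zip_cons_cons, List.zip_append hls]
    refine ⟨by simp [hls], List.pairwise_cons.2 ⟨?_, List.pairwise_append.2
      ⟨(iso_iff_zip.1 hiso).2, by simp [Rel], ?_⟩⟩⟩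
    · rintro ⟨x, y⟩ hmem
      rcases List.mem_append.1 hmem with hmem | hmem
      · obtain ⟨hx, hy⟩ := List.of_mem_zip hmem
        have := hgt x hx
        have := hm y hy
        exact ⟨by omega, by omega⟩
      · simp at hmem
        rcases hmem with ⟨rfl, rfl⟩
        exact ⟨by omega, by omega⟩
    · rintro ⟨x, y⟩ hmem ⟨x2, y2⟩ hmem2
      simp at hmem2
      rcases hmem2 with ⟨rfl, rfl⟩
      obtain ⟨hx, hy⟩ := List.of_mem_zip hmem
      have := hgt x hx
      have := hm y hy
      exact ⟨by omega, by omega⟩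

lemma iso_1212 {s : List ℕ} :
    WordOrdIso s [1,2,1,2] ↔ ∃ x y, x < y ∧ s = [x, y, x, y] := by
  constructor
  · intro h
    have hl := h.1
    rcases s with _ | ⟨x, _ | ⟨y, _ | ⟨z, _ | ⟨t, _ | _⟩⟩⟩⟩ <;> simp at hl
    have h01 := h.2 0 1 (by simp) (by simp)
    have h02 := h.2 0 2 (by simp) (by simp)
    have h20 := h.2 2 0 (by simp) (by simp)
    have h13 := h.2 1 3 (by simp) (by simp)
    have h31 := h.2 3 1 (by simp) (by simp)
    simp [List.getD] at h01 h02 h20 h13 h31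
    refine ⟨x, y, by omega, by simp; omega⟩
  · rintro ⟨x, y, hxy, rfl⟩
    refine ⟨rfl, fun i j hi hj => ?_⟩
    simp only [List.length_cons, List.length_nil] at hi hj
    interval_cases i <;> interval_cases j <;> simp [List.getD] <;> omega

/-! ### PatContains characterizations -/

lemma map_add_one_ge {p : List ℕ} (hp : ∀ x ∈ p, 1 ≤ x) :
    ∀ y ∈ p.map (· + 1), 2 ≤ y := by
  intro y hy
  obtain ⟨x, hx, rfl⟩ := List.mem_map.1 hy
  have := hp x hx; omega

lemma patContains_one_iff {w p : List ℕ} (hp : ∀ x ∈ p, 1 ≤ x) :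
    PatContains w (1 :: p.map (· + 1)) ↔
      ∃ a s, (a :: s).Sublist w ∧ (∀ x ∈ s, a < x) ∧ WordOrdIso s p := by
  constructor
  · rintro ⟨s0, hsub, hiso⟩
    obtain ⟨a, s', rfl, hgt, hiso'⟩ := (iso_one_cons (map_add_one_ge hp)).1 hiso
    exact ⟨a, s', hsub, hgt, (iso_map_add_right 1).1 hiso'⟩
  · rintro ⟨a, s, hsub, hgt, hiso⟩
    exact ⟨a :: s, hsub, (iso_one_cons (map_add_one_ge hp)).2
      ⟨a, s, rfl, hgt, (iso_map_add_right 1).2 hiso⟩⟩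

lemma patContains_one_one_iff {w p : List ℕ} (hp : ∀ x ∈ p, 1 ≤ x) :
    PatContains w ((1 :: p.map (· + 1)) ++ [1]) ↔
      ∃ a s, (a :: (s ++ [a])).Sublist w ∧ (∀ x ∈ s, a < x) ∧ WordOrdIso s p := by
  have he : (1 :: p.map (· + 1)) ++ [1] = 1 :: (p.map (· + 1) ++ [1]) := by simp
  rw [he]
  constructor
  · rintro ⟨s0, hsub, hiso⟩
    obtain ⟨a, s', rfl, hgt, hiso'⟩ := (iso_one_cons_one (map_add_one_ge hp)).1 hiso
    exact ⟨a, s', hsub, hgt, (iso_map_add_right 1).1 hiso'⟩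
  · rintro ⟨a, s, hsub, hgt, hiso⟩
    exact ⟨a :: (s ++ [a]), hsub, (iso_one_cons_one (map_add_one_ge hp)).2
      ⟨a, s, rfl, hgt, (iso_map_add_right 1).2 hiso⟩⟩

lemma patContains_1212_iff {w : List ℕ} :
    PatContains w [1,2,1,2] ↔ ∃ x y, x < y ∧ [x, y, x, y].Sublist w := by
  constructor
  · rintro ⟨s0, hsub, hiso⟩
    obtain ⟨x, y, hxy, rfl⟩ := iso_1212.1 hiso
    exact ⟨x, y, hxy, hsub⟩
  · rintro ⟨x, y, hxy, hsub⟩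
    exact ⟨[x,y,x,y], hsub, iso_1212.2 ⟨x, y, hxy, rfl⟩⟩

lemma nonCrossing_iff {w : List ℕ} :
    NonCrossing w ↔ ¬ ∃ x y, x < y ∧ [x, y, x, y].Sublist w := by
  rw [NonCrossing, PatAvoids, patContains_1212_iff]

lemma nonCrossing_sublist {w w' : List ℕ} (h : w'.Sublist w) (hw : NonCrossing w) :
    NonCrossing w' := by
  rw [nonCrossing_iff] at *
  rintro ⟨x, y, hxy, hs⟩
  exact hw ⟨x, y, hxy, hs.trans h⟩

lemma nonCrossing_map_add {w : List ℕ} (c : ℕ) :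
    NonCrossing (w.map (· + c)) ↔ NonCrossing w := by
  unfold NonCrossing PatAvoids
  rw [patContains_map_add_iff]

/-! ### RGF structure lemmas -/

lemma rgf_head {w : List ℕ} (h : IsRGF w) (hne : w ≠ []) : w.getD 0 0 = 1 :=
  h.2.1 hne

lemma rgf_growth {w : List ℕ} (h : IsRGF w) {i : ℕ} (hi : i + 1 < w.length) :
    w.getD (i+1) 0 ≤ (w.take (i+1)).foldr max 0 + 1 := h.2.2 i hi

lemma rgf_take {w : List ℕ} (h : IsRGF w) (k : ℕ) : IsRGF (w.take k) := by
  refine ⟨fun x hx => h.1 x ((List.take_sublist k w).mem hx), ?_, ?_⟩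
  · intro hne
    have hk : 0 < k := by
      rcases k with _ | k
      · simp at hne
      · omega
    have hw : w ≠ [] := by
      intro hh; rw [hh] at hne; simp at hne
    have h0 : 0 < (w.take k).length := List.length_pos_iff.2 hne
    rw [List.getD_eq_getElem _ _ h0, List.getElem_take]
    have h0' : 0 < w.length := List.length_pos_iff.2 hw
    rw [← List.getD_eq_getElem _ 0 h0']
    exact rgf_head h hw
  · intro i hi
    have hiw : i + 1 < w.length := lt_of_lt_of_le hi (by simp)
    have hik : i + 1 < k := lt_of_lt_of_le hi (by simp)
    have e1 : (w.take k).getD (i+1) 0 = w.getD (i+1) 0 := by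
      rw [List.getD_eq_getElem _ _ hi, List.getElem_take,
        List.getD_eq_getElem _ _ hiw]
    have e2 : (w.take k).take (i+1) = w.take (i+1) := by
      rw [List.take_take]
      congr 1
      omega
    rw [e1, e2]
    exact rgf_growth h hiw

lemma maxtake_le {w : List ℕ} (h : IsRGF w) : ∀ k, (w.take k).foldr max 0 ≤ k := by
  intro k
  induction k with
  | zero => simp
  | succ k ih =>
    rcases le_or_gt w.length k with hk | hk
    · rw [List.take_of_length_le (by omega)]
      rw [List.take_of_length_le hk] at ih
      omega
    · rw [List.take_succ, List.getElem?_eq_getElem hk]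
      simp only [Option.toList_some, fold_append, List.foldr_cons, List.foldr_nil]
      have hwk : w[k] ≤ k + 1 := by
        rcases Nat.eq_zero_or_pos k with rfl | hk0
        · have := rgf_head h (by intro hh; rw [hh] at hk; simp at hk)
          rw [List.getD_eq_getElem _ _ hk] at this
          omega
        · obtain ⟨j, rfl⟩ : ∃ j, k = j + 1 := ⟨k - 1, by omega⟩
          have := rgf_growth h hk
          rw [List.getD_eq_getElem _ _ hk] at this
          omega
      simp only [max_le_iff]
      omega
  
lemma rgf_entry_le_length {w : List ℕ} (h : IsRGF w) {x : ℕ} (hx : x ∈ w) :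
    x ≤ w.length := by
  obtain ⟨i, hi, rfl⟩ := List.mem_iff_getElem.1 hx
  have hmem : w[i] ∈ w.take (i+1) := by
    rw [List.mem_iff_getElem]
    have hlen : i < (w.take (i+1)).length := by rw [List.length_take]; omega
    exact ⟨i, hlen, by exact List.getElem_take⟩
  have := le_fold hmem
  have := maxtake_le h (i+1)
  omega

lemma rgf_mem_of_le {w : List ℕ} (h : IsRGF w) {c : ℕ} (h1 : 1 ≤ c)
    (h2 : c ≤ nLetters w) : c ∈ w := by
  suffices H : ∀ k, c ≤ (w.take k).foldr max 0 → c ∈ w.take k by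
    have := H w.length
    rw [List.take_length] at this
    exact this h2
  intro k
  induction k with
  | zero => simp; omega
  | succ k ih =>
    intro hc
    rcases le_or_gt w.length k with hk | hk
    · rw [List.take_of_length_le (by omega)]
      rw [List.take_of_length_le hk] at ih
      rw [List.take_of_length_le (by omega : w.length ≤ k+1)] at hc
      exact ih hc
    · rw [List.take_succ, List.getElem?_eq_getElem hk] at hc ⊢
      simp only [Option.toList_some, fold_append, List.foldr_cons, List.foldr_nil,
        max_le_iff] at hc
      rcases le_or_gt c ((w.take k).foldr max 0) with hle | hgt
      · exact List.mem_append_left _ (ih hle)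
      · have hwk : c ≤ w[k] := by
          rcases max_cases ((w.take k).foldr max 0) (max w[k] 0) with ⟨he, _⟩ | ⟨he, _⟩
          · omega
          · rw [he] at hc
            simp only [le_max_iff] at hc
            omega
        have hge : w[k] ≤ (w.take k).foldr max 0 + 1 := by
          rcases Nat.eq_zero_or_pos k with rfl | hk0
          · have := rgf_head h (by intro hh; rw [hh] at hk; simp at hk)
            rw [List.getD_eq_getElem _ _ hk] at this
            simp
            omega
          · obtain ⟨j, rfl⟩ : ∃ j, k = j + 1 := ⟨k - 1, by omega⟩
            have := rgf_growth h hk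
            rw [List.getD_eq_getElem _ _ hk] at this
            exact this
        have : c = w[k] := by omega
        exact List.mem_append_right _ (by simp [this])

lemma rgf_append_one {v : List ℕ} (h : IsRGF v) : IsRGF (v ++ [1]) := by
  refine ⟨?_, ?_, ?_⟩
  · intro x hx
    rcases List.mem_append.1 hx with hx | hx
    · exact h.1 x hx
    · simp at hx; omega
  · intro _
    rcases eq_or_ne v [] with rfl | hne
    · simp
    · rw [List.getD_append _ _ _ _ (List.length_pos_iff.2 hne)]
      exact rgf_head h hne
  · intro i hi
    simp only [List.length_append, List.length_cons, List.length_nil] at hi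
    rcases lt_or_ge (i+1) v.length with hlt | hge
    · rw [List.getD_append _ _ _ _ hlt, List.take_append_of_le_length (by omega)]
      exact rgf_growth h hlt
    · have : i + 1 = v.length := by omega
      rw [List.getD_append_right _ _ _ _ hge, this]
      simp

/-! ### RGF composition and splitting -/

lemma nLetters_le_of_mem {w : List ℕ} {x : ℕ} (hx : x ∈ w) : x ≤ nLetters w :=
  le_fold hx

lemma nLetters_mem {w : List ℕ} (h : IsRGF w) (hne : w ≠ []) : nLetters w ∈ w :=
  fold_mem hne h.1

/-- SPLIT2: composing RGFs (with a nonempty left part) gives an RGF. -/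
lemma rgf_comp {a b : List ℕ} (ha : IsRGF a) (hb : IsRGF b) (hane : a ≠ []) :
    IsRGF (a ++ b.map (· + nLetters a)) := by
  set N := nLetters a with hN
  refine ⟨?_, ?_, ?_⟩
  · intro x hx
    rcases List.mem_append.1 hx with hx | hx
    · exact ha.1 x hx
    · obtain ⟨y, hy, rfl⟩ := List.mem_map.1 hx
      have := hb.1 y hy
      omega
  · intro _
    rw [List.getD_append _ _ _ _ (List.length_pos_iff.2 hane)]
    exact rgf_head ha hane
  · intro i hi
    simp only [List.length_append, List.length_map] at hi
    rcases lt_or_ge (i+1) a.length with hlt | hge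
    · rw [List.getD_append _ _ _ _ hlt, List.take_append_of_le_length (by omega)]
      exact rgf_growth ha hlt
    · obtain ⟨j, hj⟩ : ∃ j, i + 1 = a.length + j := ⟨i + 1 - a.length, by omega⟩
      have hjb : j < b.length := by omega
      have e1 : (a ++ b.map (· + N)).getD (i+1) 0 = b.getD j 0 + N := by
        rw [List.getD_append_right _ _ _ _ hge, hj]
        simp only [Nat.add_sub_cancel_left]
        rw [List.getD_eq_getElem _ _ (by simpa using hjb), List.getElem_map,
          List.getD_eq_getElem _ _ hjb]
      have e2 : (a ++ b.map (· + N)).take (i+1) = a ++ (b.map (· + N)).take j := by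
        rw [hj, List.take_length_add_append]
      rw [e1, e2, fold_append]
      rcases Nat.eq_zero_or_pos j with rfl | hj0
      · simp only [List.take_zero, List.foldr_nil]
        have hb0 : b.getD 0 0 = 1 := rgf_head hb (by intro hh; rw [hh] at hjb; simp at hjb)
        rw [hb0]
        simp only [hN, nLetters]
        omega
      · obtain ⟨j', rfl⟩ : ∃ j', j = j' + 1 := ⟨j - 1, by omega⟩
        have htne : b.take (j'+1) ≠ [] := by
          intro hh
          have := congrArg List.length hh
          simp only [List.length_take, List.length_nil] at this
          omega
        have e3 : ((b.map (· + N)).take (j'+1)).foldr max 0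
            = (b.take (j'+1)).foldr max 0 + N := by
          rw [← List.map_take, fold_map_add htne]
        rw [e3]
        have hgrow := rgf_growth hb hjb
        have : (a.foldr max 0) = N := rfl
        rw [max_eq_right (by omega : a.foldr max 0 ≤ (b.take (j'+1)).foldr max 0 + N)]
        omega

/-- SPLIT: the (shifted-down) right part of a gap-split RGF is an RGF. -/
lemma rgf_split {a b : List ℕ} (h : IsRGF (a ++ b)) (hane : a ≠ [])
    (hgap : ∀ y ∈ b, nLetters a < y) :
    IsRGF (b.map (· - nLetters a)) := by
  set N := nLetters a with hN
  have hNa : a.foldr max 0 = N := rfl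
  refine ⟨?_, ?_, ?_⟩
  · intro x hx
    obtain ⟨y, hy, rfl⟩ := List.mem_map.1 hx
    have := hgap y hy
    omega
  · intro hne
    have hbne : b ≠ [] := by intro hh; rw [hh] at hne; simp at hne
    have hb0 : 0 < b.length := List.length_pos_iff.2 hbne
    have hla : 0 < a.length := List.length_pos_iff.2 hane
    obtain ⟨k, hk⟩ : ∃ k, a.length = k + 1 := ⟨a.length - 1, by omega⟩
    have hpos : k + 1 < (a ++ b).length := by simp; omega
    have hgrow := rgf_growth h hpos
    rw [← hk, List.take_append_of_le_length (le_refl _), List.take_length,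
      List.getD_append_right _ _ _ _ (le_refl _), Nat.sub_self, hNa] at hgrow
    have hb0mem : b.getD 0 0 ∈ b := by
      rw [List.getD_eq_getElem _ _ hb0]
      exact List.getElem_mem _
    have hgt := hgap _ hb0mem
    have e : (b.map (· - N)).getD 0 0 = b.getD 0 0 - N := by
      rw [List.getD_eq_getElem _ _ (by simpa using hb0), List.getElem_map,
        List.getD_eq_getElem _ _ hb0]
    rw [e]
    omega
  · intro i hi
    simp only [List.length_map] at hi
    have hpos : a.length + i + 1 < (a ++ b).length := by simp; omega
    have hgrow := rgf_growth h hpos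
    have e1 : (a ++ b).getD (a.length + i + 1) 0 = b.getD (i+1) 0 := by
      rw [List.getD_append_right _ _ _ _ (by omega)]
      congr 1
      omega
    have e2 : (a ++ b).take (a.length + i + 1) = a ++ b.take (i+1) := by
      rw [show a.length + i + 1 = a.length + (i+1) from rfl, List.take_length_add_append]
    rw [e1, e2, fold_append, hNa] at hgrow
    have htne : b.take (i+1) ≠ [] := by
      intro hh
      have := congrArg List.length hh
      simp only [List.length_take, List.length_nil] at this
      omega
    have hmapeq : ((b.take (i+1)).map (· - N)).map (· + N) = b.take (i+1) := by
      rw [List.map_map]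
      have hcg : ∀ x ∈ b.take (i+1), ((fun x => x + N) ∘ fun x => x - N) x = id x := by
        intro x hx
        have hxb : x ∈ b := (List.take_sublist _ _).mem hx
        have := hgap x hxb
        simp only [Function.comp_apply, id]
        omega
      rw [List.map_congr_left hcg, List.map_id]
    have hmapne : (b.take (i+1)).map (· - N) ≠ [] := by
      simpa using htne
    have e3 : (b.take (i+1)).foldr max 0 = ((b.take (i+1)).map (· - N)).foldr max 0 + N := by
      conv_lhs => rw [← hmapeq]
      rw [fold_map_add hmapne]
    rw [e3, max_eq_right (by omega)] at hgrow
    have e4 : (b.map (· - N)).getD (i+1) 0 = b.getD (i+1) 0 - N := by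
      rw [List.getD_eq_getElem _ _ (by simpa using hi), List.getElem_map,
        List.getD_eq_getElem _ _ hi]
    have e5 : ((b.map (· - N)).take (i+1)).foldr max 0
        = ((b.take (i+1)).map (· - N)).foldr max 0 := by
      rw [List.map_take]
    rw [e4, e5]
    omega

/-! ### The glue decomposition -/

/-- glue v u = v 1 u↑ : the word whose last 1 is between `v` and the shift of `u`. -/
def glue (v u : List ℕ) : List ℕ := v ++ 1 :: u.map (· + nLetters (v ++ [1]))

lemma glue_eq (v u : List ℕ) :
    glue v u = (v ++ [1]) ++ u.map (· + nLetters (v ++ [1])) := by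
  simp [glue]

lemma one_le_shift {v : List ℕ} : 1 ≤ nLetters (v ++ [1]) :=
  le_fold (by simp)

lemma nLetters_le_shift {v : List ℕ} : nLetters v ≤ nLetters (v ++ [1]) := by
  rw [nLetters_append_one]; exact le_max_left _ _

lemma mem_shift_gt {v u : List ℕ} (hu : IsRGF u) {x : ℕ}
    (hx : x ∈ u.map (· + nLetters (v ++ [1]))) : nLetters (v ++ [1]) < x := by
  obtain ⟨y, hy, rfl⟩ := List.mem_map.1 hx
  have := hu.1 y hy
  omega

lemma mem_v_le {v : List ℕ} {x : ℕ} (hx : x ∈ v) : x ≤ nLetters (v ++ [1]) :=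
  le_trans (nLetters_le_of_mem hx) nLetters_le_shift

lemma glue_rgf {v u : List ℕ} (hv : IsRGF v) (hu : IsRGF u) : IsRGF (glue v u) := by
  rw [glue_eq]
  exact rgf_comp (rgf_append_one hv) hu (by simp)

lemma glue_length (v u : List ℕ) :
    (glue v u).length = v.length + 1 + u.length := by
  simp [glue]; omega

lemma glue_nc {v u : List ℕ} (hv : IsRGF v) (hu : IsRGF u)
    (hvnc : NonCrossing v) (hunc : NonCrossing u) : NonCrossing (glue v u) := by
  set M := nLetters (v ++ [1]) with hM
  rw [nonCrossing_iff]
  rintro ⟨x, y, hxy, hsub⟩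
  rw [glue] at hsub
  obtain ⟨l₁, l₂, heq, hs1, hs2⟩ := List.sublist_append_iff.1 hsub
  have hM1 : 1 ≤ M := one_le_shift
  rcases l₁ with _ | ⟨a1, _ | ⟨a2, _ | ⟨a3, _ | ⟨a4, l₁⟩⟩⟩⟩
  · -- all four in 1 :: u↑
    simp only [List.nil_append] at heq
    subst heq
    rcases List.sublist_cons_iff.1 hs2 with h2 | ⟨r, he, hr⟩
    · obtain ⟨l', hl', hmap⟩ := List.sublist_map_iff.1 h2
      rcases l' with _ | ⟨b1, _ | ⟨b2, _ | ⟨b3, _ | ⟨b4, _ | _⟩⟩⟩⟩ <;> simp at hmap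
      obtain ⟨e1, e2, e3, e4⟩ := hmap
      have hb : b1 = b3 ∧ b2 = b4 ∧ b1 < b2 := by omega
      rw [nonCrossing_iff] at hunc
      exact hunc ⟨b1, b2, hb.2.2, by rw [hb.1, hb.2.1] at hl' ⊢; exact hl'⟩
    · injection he with he1 he2
      subst he2
      have h1mem : x ∈ u.map (· + M) := hr.mem (by simp)
      have := mem_shift_gt (v := v) hu h1mem
      omega
  · -- l₁ = [x]
    simp only [List.cons_append, List.nil_append, List.cons.injEq] at heq
    obtain ⟨e1, e2⟩ := heq
    subst e1; subst e2
    have hxv : x ∈ v := hs1.mem (by simp)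
    have hxM : x ≤ M := mem_v_le hxv
    have hx1 : 1 ≤ x := hv.1 x hxv
    rcases List.sublist_cons_iff.1 hs2 with h2 | ⟨r, he, hr⟩
    · have hm : x ∈ u.map (· + M) := h2.mem (by simp)
      have := mem_shift_gt (v := v) hu hm
      omega
    · injection he with he1 he2
      omega
  · -- l₁ = [x, y]
    simp only [List.cons_append, List.nil_append, List.cons.injEq] at heq
    obtain ⟨e1, e2, e3⟩ := heq
    subst e1; subst e2; subst e3
    have hyv : y ∈ v := hs1.mem (by simp)
    have hyM : y ≤ M := mem_v_le hyv
    rcases List.sublist_cons_iff.1 hs2 with h2 | ⟨r, he, hr⟩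
    · have hm : y ∈ u.map (· + M) := h2.mem (by simp)
      have := mem_shift_gt (v := v) hu hm
      omega
    · injection he with he1 he2
      subst he2
      have hm : y ∈ u.map (· + M) := hr.mem (by simp)
      have := mem_shift_gt (v := v) hu hm
      omega
  · -- l₁ = [x, y, x]
    simp only [List.cons_append, List.nil_append, List.cons.injEq] at heq
    obtain ⟨e1, e2, e3, e4⟩ := heq
    subst e1; subst e2; subst e3; subst e4
    have hyv : y ∈ v := hs1.mem (by simp)
    have hyM : y ≤ M := mem_v_le hyv
    have hxv : x ∈ v := hs1.mem (by simp)
    have hx1 : 1 ≤ x := hv.1 x hxv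
    rcases List.sublist_cons_iff.1 hs2 with h2 | ⟨r, he, hr⟩
    · have hm : y ∈ u.map (· + M) := h2.mem (by simp)
      have := mem_shift_gt (v := v) hu hm
      omega
    · injection he with he1 he2
      omega
  · -- l₁ has length ≥ 4
    simp only [List.cons_append, List.cons.injEq] at heq
    obtain ⟨e1, e2, e3, e4, e5⟩ := heq
    subst e1; subst e2; subst e3; subst e4
    obtain ⟨f1, f2⟩ := List.append_eq_nil_iff.1 e5.symm
    subst f1
    rw [nonCrossing_iff] at hvnc
    exact hvnc ⟨x, y, hxy, hs1⟩

/-! ### Existence and uniqueness of the decomposition -/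

lemma glue_surj {w : List ℕ} (hw : IsRGF w) (hwnc : NonCrossing w) (hne : w ≠ []) :
    ∃ v u, IsRGF v ∧ IsRGF u ∧ NonCrossing v ∧ NonCrossing u ∧ w = glue v u := by
  classical
  set P : ℕ → Prop := fun i => w.getD i 0 = 1 with hP
  have hlen : 0 < w.length := List.length_pos_iff.2 hne
  set j := Nat.findGreatest P (w.length - 1) with hjdef
  have hP0 : P 0 := rgf_head hw hne
  have hPj : P j := Nat.findGreatest_spec (Nat.zero_le _) hP0
  have hjle : j ≤ w.length - 1 := Nat.findGreatest_le _
  have hjlt : j < w.length := by omega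
  set v := w.take j with hv
  set rest := w.drop (j+1) with hrest
  have hsplit : w = v ++ 1 :: rest := by
    conv_lhs => rw [← List.take_append_drop j w]
    congr 1
    rw [List.drop_eq_getElem_cons hjlt]
    congr 1
    rw [← List.getD_eq_getElem w 0 hjlt]
    exact hPj
  have hvrgf : IsRGF v := rgf_take hw j
  set M := nLetters (v ++ [1]) with hMdef
  -- every entry of rest exceeds M
  have hgap : ∀ y ∈ rest, M < y := by
    intro y hy
    obtain ⟨t, ht, rfl⟩ := List.mem_iff_getElem.1 hy
    have htlen : j + 1 + t < w.length := by
      have := List.length_drop (i := j+1) (l := w)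
      rw [← hrest] at this
      omega
    have hyw : rest[t] = w[j+1+t] := List.getElem_drop
    have hy1 : 1 ≤ rest[t] := by
      rw [hyw]
      exact hw.1 _ (List.getElem_mem _)
    have hynot1 : rest[t] ≠ 1 := by
      intro hone
      have hnP := Nat.findGreatest_is_greatest (P := P) (n := w.length - 1)
        (k := j+1+t) (by omega) (by omega)
      apply hnP
      show w.getD (j+1+t) 0 = 1
      rw [List.getD_eq_getElem w 0 htlen, ← hyw, hone]
    by_contra hcon
    push_neg at hcon
    have hM1 : rest[t] ≤ nLetters v := by
      rw [hMdef, nLetters_append_one] at hcon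
      omega
    have hmemv : rest[t] ∈ v := rgf_mem_of_le hvrgf (by omega) hM1
    have hvne : v ≠ [] := by
      intro hh
      rw [hh] at hM1
      simp [nLetters] at hM1
      omega
    obtain ⟨c, v', hcv⟩ := List.exists_cons_of_ne_nil hvne
    have hc1 : c = 1 := by
      have := rgf_head hvrgf hvne
      rw [hcv] at this
      simpa using this
    have hsub1 : List.Sublist [1, rest[t]] v := by
      rw [hcv, hc1]
      refine List.cons_sublist_cons.2 (List.singleton_sublist.2 ?_)
      have : rest[t] ∈ c :: v' := by rw [← hcv]; exact hmemv
      rcases List.mem_cons.1 this with hh | hh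
      · omega
      · exact hh
    have hsub2 : List.Sublist [1, rest[t]] (1 :: rest) := by
      exact List.cons_sublist_cons.2 (List.singleton_sublist.2 (List.getElem_mem _))
    have : List.Sublist [1, rest[t], 1, rest[t]] w := by
      rw [hsplit]
      exact List.Sublist.append hsub1 hsub2
    rw [nonCrossing_iff] at hwnc
    exact hwnc ⟨1, rest[t], by omega, this⟩
  set u := rest.map (· - M) with hu
  have hrestu : rest = u.map (· + M) := by
    rw [hu, List.map_map]
    have : ∀ x ∈ rest, ((· + M) ∘ (· - M)) x = id x := by
      intro x hx
      have := hgap x hx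
      simp only [Function.comp_apply, id]
      omega
    rw [List.map_congr_left this, List.map_id]
  have hsplit' : w = (v ++ [1]) ++ rest := by
    rw [hsplit]; simp
  have hurgf : IsRGF u := by
    rw [hu]
    exact rgf_split (by rw [← hsplit']; exact hw) (by simp) (by rw [← hMdef]; exact hgap)
  have hvnc : NonCrossing v := nonCrossing_sublist (by rw [hsplit]; exact List.sublist_append_left _ _) hwnc
  have hunc : NonCrossing u := by
    have hrnc : NonCrossing rest :=
      nonCrossing_sublist (by rw [hsplit]; exact (List.sublist_cons_self _ _).trans (List.sublist_append_right _ _)) hwnc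
    rw [hrestu] at hrnc
    exact (nonCrossing_map_add M).1 hrnc
  exact ⟨v, u, hvrgf, hurgf, hvnc, hunc, by rw [glue, ← hMdef, ← hrestu, hsplit]⟩

lemma glue_inj {v u v' u' : List ℕ} (hu : IsRGF u) (hu' : IsRGF u')
    (h : glue v u = glue v' u') : v = v' ∧ u = u' := by
  have hlen : v.length + 1 + u.length = v'.length + 1 + u'.length := by
    have := congrArg List.length h
    rwa [glue_length, glue_length] at this
  have key : ∀ (a b a' b' : List ℕ), IsRGF b → IsRGF b' → glue a b = glue a' b' →
      a.length < a'.length → False := by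
    intro a b a' b' hb hb' hgl hlt
    have hlen' : a.length + 1 + b.length = a'.length + 1 + b'.length := by
      have := congrArg List.length hgl
      rwa [glue_length, glue_length] at this
    have hlt2 : a'.length < (glue a b).length := by
      rw [glue_length]; omega
    have e1 : (glue a b).getD a'.length 0 = (glue a' b').getD a'.length 0 := by rw [hgl]
    have e2 : (glue a' b').getD a'.length 0 = 1 := by
      rw [glue, List.getD_append_right _ _ _ _ (le_refl _), Nat.sub_self]
      simp
    set Ma := nLetters (a ++ [1]) with hMa
    have hidx : a'.length - a.length - 1 < (b.map (· + Ma)).length := by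
      simp only [List.length_map]
      omega
    have e3 : (glue a b).getD a'.length 0 = (b.map (· + Ma)).getD (a'.length - a.length - 1) 0 := by
      rw [glue, List.getD_append_right _ _ _ _ (by omega)]
      have h2 : a'.length - a.length = (a'.length - a.length - 1) + 1 := by omega
      conv_lhs => rw [h2]
      rw [List.getD_cons_succ]
    have hmem : (b.map (· + Ma)).getD (a'.length - a.length - 1) 0 ∈ b.map (· + Ma) := by
      rw [List.getD_eq_getElem _ _ hidx]
      exact List.getElem_mem _
    have hgt := mem_shift_gt (v := a) hb hmem
    have h1M : 1 ≤ Ma := one_le_shift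
    rw [e3] at e1
    rw [e2] at e1
    omega
  have hveq : v.length = v'.length := by
    by_contra hne
    rcases lt_or_gt_of_ne hne with hlt | hlt
    · exact key v u v' u' hu hu' h hlt
    · exact key v' u' v u hu' hu h.symm hlt
  rw [glue, glue] at h
  obtain ⟨rfl, htail⟩ := List.append_inj h hveq
  refine ⟨rfl, ?_⟩
  injection htail with _ htail2
  have hinj : Function.Injective (· + nLetters (v ++ [1])) := fun x y hxy => by
    simpa using hxy
  exact List.map_injective_iff.2 hinj htail2

/-! ### Connectedness: an occurrence cannot split across a value gap -/

lemma getD_take' {w : List ℕ} {k i : ℕ} (h : i < k) (h2 : i < w.length) :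
    (w.take k).getD i 0 = w.getD i 0 := by
  rw [List.getD_eq_getElem _ _ (by rw [List.length_take]; omega),
    List.getD_eq_getElem _ _ h2]
  exact List.getElem_take

lemma getD_drop' {w : List ℕ} {k j : ℕ} (h : k + j < w.length) :
    (w.drop k).getD j 0 = w.getD (k + j) 0 := by
  rw [List.getD_eq_getElem _ _ (by rw [List.length_drop]; omega),
    List.getD_eq_getElem _ _ h]
  exact List.getElem_drop

lemma conn_no_split {σ s₁ s₂ : List ℕ} (hσ : IsRGF σ) (hσc : Connected σ)
    (hiso : WordOrdIso (s₁ ++ s₂) σ) (h1 : s₁ ≠ []) (h2 : s₂ ≠ [])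
    (hcross : ∀ x ∈ s₁, ∀ y ∈ s₂, x < y) : False := by
  have hlen : σ.length = s₁.length + s₂.length := by
    rw [← hiso.1, List.length_append]
  have hk0 : 0 < s₁.length := List.length_pos_iff.2 h1
  have hk2 : 0 < s₂.length := List.length_pos_iff.2 h2
  have hσsplit : σ = σ.take s₁.length ++ σ.drop s₁.length :=
    (List.take_append_drop s₁.length σ).symm
  have hl1 : (σ.take s₁.length).length = s₁.length := by
    rw [List.length_take]; omega
  have hl2 : (σ.drop s₁.length).length = s₂.length := by
    rw [List.length_drop]; omega
  -- cross inequalities transfer to σ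
  have hcrossσ : ∀ x ∈ σ.take s₁.length, ∀ y ∈ σ.drop s₁.length, x < y := by
    intro x hx y hy
    obtain ⟨i, hi, rfl⟩ := List.mem_iff_getElem.1 hx
    obtain ⟨j, hj, rfl⟩ := List.mem_iff_getElem.1 hy
    have hi' : i < s₁.length := by omega
    have hj' : s₁.length + j < σ.length := by omega
    have hlt : (s₁ ++ s₂).getD i 0 < (s₁ ++ s₂).getD (s₁.length + j) 0 := by
      have e1 : (s₁ ++ s₂).getD i 0 = s₁.getD i 0 := List.getD_append _ _ _ _ hi'
      have e2 : (s₁ ++ s₂).getD (s₁.length + j) 0 = s₂.getD j 0 := by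
        rw [List.getD_append_right _ _ _ _ (by omega)]
        congr 1
        omega
      rw [e1, e2]
      have m1 : s₁.getD i 0 ∈ s₁ := by
        rw [List.getD_eq_getElem _ _ hi']
        exact List.getElem_mem _
      have m2 : s₂.getD j 0 ∈ s₂ := by
        rw [List.getD_eq_getElem _ _ (by omega)]
        exact List.getElem_mem _
      exact hcross _ m1 _ m2
    have hσlt := (hiso.2 i (s₁.length + j) (by rw [List.length_append]; omega)
      (by rw [List.length_append]; omega)).1 hlt
    rw [← List.getD_eq_getElem _ 0 hi, ← List.getD_eq_getElem _ 0 hj,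
      getD_take' hi' (by omega), getD_drop' (by omega)]
    exact hσlt
  have hσ1rgf : IsRGF (σ.take s₁.length) := rgf_take hσ s₁.length
  have hσ1ne : σ.take s₁.length ≠ [] := by
    intro hh
    rw [hh] at hl1
    simp at hl1
    omega
  have hσ2ne : σ.drop s₁.length ≠ [] := by
    intro hh
    rw [hh] at hl2
    simp at hl2
    omega
  have hNmem : nLetters (σ.take s₁.length) ∈ σ.take s₁.length := nLetters_mem hσ1rgf hσ1ne
  have hgap : ∀ y ∈ σ.drop s₁.length, nLetters (σ.take s₁.length) < y :=
    fun y hy => hcrossσ _ hNmem y hy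
  have hb' : IsRGF ((σ.drop s₁.length).map (· - nLetters (σ.take s₁.length))) :=
    rgf_split (by rw [← hσsplit]; exact hσ) hσ1ne hgap
  apply hσc.2
  refine ⟨σ.take s₁.length, (σ.drop s₁.length).map (· - nLetters (σ.take s₁.length)),
    hσ1rgf, hb', hσ1ne, by simpa using hσ2ne, ?_⟩
  rw [rgfComp, List.map_map]
  have hcg : ∀ x ∈ σ.drop s₁.length,
      ((· + nLetters (σ.take s₁.length)) ∘ (· - nLetters (σ.take s₁.length))) x = id x := by
    intro x hx
    have := hgap x hx
    simp only [Function.comp_apply, id]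
    omega
  rw [List.map_congr_left hcg, List.map_id, ← hσsplit]

/-! ### Avoidance transfer across the glue decomposition -/

lemma sublist_tail_of_cons {a b : ℕ} {l l' : List ℕ} (h : (a::l).Sublist (b::l')) :
    l.Sublist l' := by
  rcases List.sublist_cons_iff.1 h with h2 | ⟨r, he, hr⟩
  · exact (List.sublist_cons_self a l).trans h2
  · injection he with h1 h2; subst h2; exact hr

lemma contains_one_glue {σ v u : List ℕ} (hσ : IsRGF σ) (hσc : Connected σ)
    (hv : IsRGF v) (hu : IsRGF u) :
    PatContains (glue v u) (1 :: σ.map (· + 1)) ↔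
      PatContains v (1 :: σ.map (· + 1)) ∨ PatContains u σ := by
  set M := nLetters (v ++ [1]) with hM
  have hM1 : 1 ≤ M := one_le_shift
  constructor
  · intro h
    obtain ⟨a, s, hsub, hgt, hiso⟩ := (patContains_one_iff hσ.1).1 h
    rw [glue, ← hM] at hsub
    obtain ⟨l₁, l₂, heq, hs1, hs2⟩ := List.sublist_append_iff.1 hsub
    rcases l₁ with _ | ⟨a1, s₁⟩
    · -- whole occurrence in 1 :: u↑
      simp only [List.nil_append] at heq
      subst heq
      have hstail : s.Sublist (u.map (· + M)) := sublist_tail_of_cons hs2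
      obtain ⟨s', hs', rfl⟩ := List.sublist_map_iff.1 hstail
      exact Or.inr ⟨s', hs', (iso_map_add_left M).1 hiso⟩
    · -- a in v
      simp only [List.cons_append, List.cons.injEq] at heq
      obtain ⟨e1, e2⟩ := heq
      subst e1
      have ha1 : 1 ≤ a := hv.1 a (hs1.mem (by simp))
      have hs1' : s₁.Sublist v := (List.sublist_cons_self a s₁).trans hs1
      rcases eq_or_ne l₂ [] with rfl | hl2ne
      · -- everything in v
        rw [List.append_nil] at e2
        subst e2
        exact Or.inl ((patContains_one_iff hσ.1).2 ⟨a, s, hs1, hgt, hiso⟩)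
      · have hl₂mem : ∀ x ∈ l₂, a < x := by
          intro x hx
          exact hgt x (by rw [e2]; exact List.mem_append_right _ hx)
        have hl₂u : l₂.Sublist (u.map (· + M)) := by
          rcases List.sublist_cons_iff.1 hs2 with h2 | ⟨r, her, hr⟩
          · exact h2
          · exfalso
            obtain ⟨c, l₂', rfl⟩ := List.exists_cons_of_ne_nil hl2ne
            injection her with he1 he2
            have := hl₂mem c (by simp)
            omega
        rcases eq_or_ne s₁ [] with rfl | hs1ne
        · -- σ entirely in u↑
          simp only [List.nil_append] at e2
          subst e2
          obtain ⟨s', hs', rfl⟩ := List.sublist_map_iff.1 hl₂u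
          exact Or.inr ⟨s', hs', (iso_map_add_left M).1 hiso⟩
        · -- split: contradiction with connectedness
          exfalso
          refine conn_no_split hσ hσc (by rw [← e2]; exact hiso) hs1ne hl2ne ?_
          intro x hx y hy
          have hxv : x ≤ M := mem_v_le (hs1'.mem hx)
          have hyu : M < y := mem_shift_gt hu (hl₂u.mem hy)
          omega
  · rintro (h | h)
    · obtain ⟨a, s, hsub, hgt, hiso⟩ := (patContains_one_iff hσ.1).1 h
      refine (patContains_one_iff hσ.1).2 ⟨a, s, ?_, hgt, hiso⟩
      exact hsub.trans (by rw [glue]; exact List.sublist_append_left _ _)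
    · obtain ⟨s, hsub, hiso⟩ := h
      refine (patContains_one_iff hσ.1).2 ⟨1, s.map (· + M), ?_, ?_, ?_⟩
      · have h1 : (1 :: s.map (· + M)).Sublist (1 :: u.map (· + M)) :=
          List.cons_sublist_cons.2 (hsub.map _)
        refine h1.trans ?_
        rw [glue, ← hM]
        exact List.sublist_append_right _ _
      · intro x hx
        obtain ⟨y, hy, rfl⟩ := List.mem_map.1 hx
        have := hu.1 y (hsub.mem hy)
        omega
      · exact (iso_map_add_left M).2 hiso

lemma contains_tau1_glue {ρ v u : List ℕ} (hρ : IsRGF ρ)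
    (hv : IsRGF v) (hu : IsRGF u) :
    PatContains (glue v u) ((1 :: ρ.map (· + 1)) ++ [1]) ↔
      PatContains v (1 :: ρ.map (· + 1)) ∨
        PatContains u ((1 :: ρ.map (· + 1)) ++ [1]) := by
  set M := nLetters (v ++ [1]) with hM
  have hM1 : 1 ≤ M := one_le_shift
  have hnot1 : (1:ℕ) ∉ u.map (· + M) := by
    intro hmem
    have := mem_shift_gt (v := v) hu hmem
    omega
  constructor
  · intro h
    obtain ⟨a, s, hsub, hgt, hiso⟩ := (patContains_one_one_iff hρ.1).1 h
    rw [glue, ← hM] at hsub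
    obtain ⟨l₁, l₂, heq, hs1, hs2⟩ := List.sublist_append_iff.1 hsub
    rcases l₁ with _ | ⟨a1, s₁⟩
    · -- whole occurrence in 1 :: u↑
      simp only [List.nil_append] at heq
      subst heq
      rcases List.sublist_cons_iff.1 hs2 with h2 | ⟨r, her, hr⟩
      · right
        rw [← patContains_map_add_iff (w := u) M]
        exact (patContains_one_one_iff hρ.1).2 ⟨a, s, h2, hgt, hiso⟩
      · exfalso
        injection her with he1 he2
        subst he2
        apply hnot1
        rw [← he1]
        exact hr.mem (List.mem_append_right _ (by simp))
    · -- a in v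
      simp only [List.cons_append, List.cons.injEq] at heq
      obtain ⟨e1, e2⟩ := heq
      subst e1
      have haM : a ≤ M := mem_v_le (hs1.mem (by simp))
      have ha1 : 1 ≤ a := hv.1 a (hs1.mem (by simp))
      rcases eq_or_ne l₂ [] with rfl | hl2ne
      · -- everything in v
        rw [List.append_nil] at e2
        subst e2
        left
        refine (patContains_one_iff hρ.1).2 ⟨a, s, ?_, hgt, hiso⟩
        refine List.Sublist.trans ?_ hs1
        exact List.cons_sublist_cons.2 (List.sublist_append_left _ _)
      · -- l₂ nonempty: its last element is a, and a = 1
        obtain ⟨dl, lst, rfl⟩ : ∃ dl lst, l₂ = dl ++ [lst] :=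
          ⟨l₂.dropLast, l₂.getLast hl2ne, (List.dropLast_append_getLast hl2ne).symm⟩
        rw [← List.append_assoc] at e2
        have hlens : s.length = (s₁ ++ dl).length := by
          have := congrArg List.length e2
          simp at this ⊢
          omega
        obtain ⟨e3, e4⟩ := List.append_inj e2 hlens
        have hlsta : lst = a := by
          simpa using e4.symm
        subst hlsta
        have halast : lst ∈ 1 :: u.map (· + M) :=
          hs2.mem (List.mem_append_right _ (by simp))
        have ha1' : lst = 1 := by
          rcases List.mem_cons.1 halast with hh | hh
          · exact hh
          · have := mem_shift_gt (v := v) hu hh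
            omega
        rcases List.sublist_cons_iff.1 hs2 with h2 | ⟨r, her, hr⟩
        · exfalso
          apply hnot1
          rw [← ha1']
          exact h2.mem (List.mem_append_right _ (by simp))
        · rcases dl with _ | ⟨c, dl'⟩
          · -- l₂ = [a] matched against head 1; occurrence of τ inside v
            rw [List.append_nil] at e3
            subst e3
            left
            exact (patContains_one_iff hρ.1).2 ⟨lst, s, hs1, hgt, hiso⟩
          · exfalso
            injection her with he1 he2
            have hcs : c ∈ s := by
              rw [e3]
              exact List.mem_append_right _ (by simp)
            have := hgt c hcs
            omega
  · rintro (h | h)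
    · -- v contains τ
      obtain ⟨a, s, hsub, hgt, hiso⟩ := (patContains_one_iff hρ.1).1 h
      have hvne : v ≠ [] := by
        intro hh
        rw [hh] at hsub
        have := List.eq_nil_of_sublist_nil hsub
        simp at this
      obtain ⟨c, v2, rfl⟩ := List.exists_cons_of_ne_nil hvne
      have hc1 : c = 1 := by
        have h0 := rgf_head hv hvne
        simpa using h0
      subst hc1
      have ha1 : 1 ≤ a := hv.1 a (hsub.mem (by simp))
      have hssub : s.Sublist v2 := by
        rcases List.sublist_cons_iff.1 hsub with h2 | ⟨r, her, hr⟩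
        · exact (List.sublist_cons_self a s).trans h2
        · injection her with he1 he2
          rw [he2]
          exact hr
      refine (patContains_one_one_iff hρ.1).2 ⟨1, s, ?_, ?_, hiso⟩
      · have h1 : (1 :: (s ++ [1])) = (1 :: s) ++ [1] := by simp
        rw [h1, glue, ← hM]
        exact List.Sublist.append (List.cons_sublist_cons.2 hssub)
          (by simp)
      · intro x hx
        have := hgt x hx
        omega
    · -- u contains τ1
      rw [← patContains_map_add_iff (w := u) M] at h
      obtain ⟨s0, hs0, hiso0⟩ := h
      refine ⟨s0, ?_, hiso0⟩
      refine hs0.trans (List.Sublist.trans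
        (List.sublist_cons_self 1 (u.map (· + M))) ?_)
      rw [glue, ← hM]
      exact List.sublist_append_right _ _

/-! ### Counting -/

def Sset (P : List ℕ) (n : ℕ) : Set (List ℕ) :=
  {w | IsRGF w ∧ NonCrossing w ∧ w.length = n ∧ PatAvoids w P}

lemma finite_bounded (n B : ℕ) :
    {l : List ℕ | l.length = n ∧ ∀ x ∈ l, x ≤ B}.Finite := by
  induction n with
  | zero =>
    apply Set.Finite.subset (Set.finite_singleton ([] : List ℕ))
    rintro l ⟨h1, _⟩
    simp only [Set.mem_singleton_iff]
    exact List.length_eq_zero_iff.1 h1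
  | succ n ih =>
    apply Set.Finite.subset (Set.Finite.image2 List.cons (Set.finite_Iic B) ih)
    rintro l ⟨h1, h2⟩
    have hne : l ≠ [] := by
      intro hh; rw [hh] at h1; simp at h1
    obtain ⟨c, t, rfl⟩ := List.exists_cons_of_ne_nil hne
    refine Set.mem_image2_of_mem ?_ ?_
    · exact h2 c (by simp)
    · refine ⟨by simpa using h1, fun x hx => h2 x (by simp [hx])⟩

lemma sset_finite (P : List ℕ) (n : ℕ) : (Sset P n).Finite := by
  apply Set.Finite.subset (finite_bounded n n)
  rintro w ⟨hrgf, _, hlen, _⟩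
  exact ⟨hlen, fun x hx => hlen ▸ rgf_entry_le_length hrgf hx⟩

lemma ncard_prod (s t : Set (List ℕ)) :
    (s ×ˢ t).ncard = s.ncard * t.ncard := by
  rw [← Nat.card_coe_set_eq, ← Nat.card_coe_set_eq, ← Nat.card_coe_set_eq,
    Nat.card_congr (Equiv.Set.prod s t), Nat.card_prod]

lemma ncard_biUnion_sum {α : Type*} (k : ℕ) (f : ℕ → Set α) (hfin : ∀ i, (f i).Finite)
    (hdisj : ∀ i j, i ≠ j → Disjoint (f i) (f j)) :
    (⋃ i ∈ Finset.range k, f i).ncard = ∑ i ∈ Finset.range k, (f i).ncard := by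
  induction k with
  | zero => simp
  | succ k ih =>
    rw [Finset.sum_range_succ, ← ih]
    have he : (⋃ i ∈ Finset.range (k+1), f i) = (⋃ i ∈ Finset.range k, f i) ∪ f k := by
      ext x
      simp only [Set.mem_iUnion, Set.mem_union, Finset.mem_range]
      constructor
      · rintro ⟨i, hi, hx⟩
        rcases eq_or_ne i k with rfl | hne
        · exact Or.inr hx
        · exact Or.inl ⟨i, by omega, hx⟩
      · rintro (⟨i, hi, hx⟩ | hx)
        · exact ⟨i, by omega, hx⟩
        · exact ⟨k, by omega, hx⟩
    rw [he]
    apply Set.ncard_union_eq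
    · rw [Set.disjoint_right]
      intro x hx hmem
      obtain ⟨i, hi⟩ := Set.mem_iUnion.1 hmem
      obtain ⟨hir, hxi⟩ := Set.mem_iUnion.1 hi
      have : i ≠ k := by
        have := Finset.mem_range.1 hir
        omega
      exact Set.disjoint_left.1 (hdisj i k this) hxi hx
    · exact Set.Finite.biUnion (Finset.range k).finite_toSet (fun i _ => hfin i)
    · exact hfin k

/-- The key recurrence: counting by splitting at the last 1. -/
lemma card_step (W P Q : List ℕ)
    (hW : W ≠ [])
    (hPQ : ∀ v u : List ℕ, IsRGF v → IsRGF u → NonCrossing v → NonCrossing u →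
      (PatAvoids (glue v u) W ↔ PatAvoids v P ∧ PatAvoids u Q)) (n : ℕ) :
    (Sset W (n+1)).ncard
      = ∑ m ∈ Finset.range (n+1), (Sset P m).ncard * (Sset Q (n - m)).ncard := by
  classical
  set F : List ℕ × List ℕ → List ℕ := fun p => glue p.1 p.2 with hF
  set comp : ℕ → Set (List ℕ × List ℕ) := fun m => (Sset P m) ×ˢ (Sset Q (n-m)) with hcomp
  set U : Set (List ℕ × List ℕ) := ⋃ m ∈ Finset.range (n+1), comp m with hU
  have himg : F '' U = Sset W (n+1) := by
    ext w
    constructor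
    · rintro ⟨⟨v, u⟩, hmem, rfl⟩
      obtain ⟨m, hm⟩ := Set.mem_iUnion.1 hmem
      obtain ⟨hmr, hvu⟩ := Set.mem_iUnion.1 hm
      obtain ⟨⟨hvr, hvn, hvl, hva⟩, ⟨hur, hun, hul, hua⟩⟩ := hvu
      have hmn : m ≤ n := by
        have := Finset.mem_range.1 hmr
        omega
      refine ⟨glue_rgf hvr hur, glue_nc hvr hur hvn hun, ?_, ?_⟩
      · rw [hF]
        simp only []
        rw [glue_length, hvl, hul]
        omega
      · exact (hPQ v u hvr hur hvn hun).2 ⟨hva, hua⟩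
    · rintro ⟨hwr, hwn, hwl, hwa⟩
      have hne : w ≠ [] := by
        intro hh; rw [hh] at hwl; simp at hwl
      obtain ⟨v, u, hvr, hur, hvn, hun, hwe⟩ := glue_surj hwr hwn hne
      have hlen : v.length + 1 + u.length = n + 1 := by
        rw [← glue_length v u, ← hwe, hwl]
      have hva := (hPQ v u hvr hur hvn hun).1 (by rw [← hwe]; exact hwa)
      refine ⟨(v, u), ?_, hwe.symm⟩
      apply Set.mem_iUnion.2
      refine ⟨v.length, Set.mem_iUnion.2 ⟨Finset.mem_range.2 (by omega), ?_⟩⟩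
      exact ⟨⟨hvr, hvn, rfl, hva.1⟩, ⟨hur, hun, show u.length = n - v.length by omega, hva.2⟩⟩
  have hinj : Set.InjOn F U := by
    rintro ⟨v, u⟩ hvu ⟨v', u'⟩ hvu' heq
    obtain ⟨m, hm⟩ := Set.mem_iUnion.1 hvu
    obtain ⟨hmr, hmem⟩ := Set.mem_iUnion.1 hm
    obtain ⟨m', hm'⟩ := Set.mem_iUnion.1 hvu'
    obtain ⟨hmr', hmem'⟩ := Set.mem_iUnion.1 hm'
    have h1 := glue_inj hmem.2.1 hmem'.2.1 heq
    rw [Prod.mk.injEq]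
    exact h1
  have hcard : (Sset W (n+1)).ncard = U.ncard := by
    rw [← himg, Set.ncard_image_of_injOn hinj]
  rw [hcard, hU]
  rw [ncard_biUnion_sum (n+1) comp (fun i => Set.Finite.prod (sset_finite P i) (sset_finite Q (n-i)))]
  · apply Finset.sum_congr rfl
    intro m _
    rw [hcomp]
    exact ncard_prod _ _
  · intro i j hij
    rw [Set.disjoint_left]
    rintro ⟨v, u⟩ hvi hvj
    obtain ⟨⟨_, _, hvl, _⟩, _⟩ := hvi
    obtain ⟨⟨_, _, hvl', _⟩, _⟩ := hvj
    exact hij (hvl ▸ hvl')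

lemma sset_zero {P : List ℕ} (hP : P ≠ []) : Sset P 0 = {([] : List ℕ)} := by
  ext w
  simp only [Sset, Set.mem_setOf_eq, Set.mem_singleton_iff]
  constructor
  · rintro ⟨_, _, hl, _⟩
    exact List.length_eq_zero_iff.1 hl
  · rintro rfl
    refine ⟨⟨by simp, by simp, by intro i hi; simp at hi⟩, ?_, rfl, ?_⟩
    · rintro ⟨s, hs, hiso⟩
      rw [List.sublist_nil] at hs
      subst hs
      have := hiso.1
      simp at this
    · rintro ⟨s, hs, hiso⟩
      rw [List.sublist_nil] at hs
      subst hs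
      have := hiso.1
      exact hP (List.length_eq_zero_iff.1 this.symm)

lemma ncAvoid_eq (n : ℕ) (P : List ℕ) : ncAvoidCount n P = (Sset P n).ncard := rfl

end Aux

/-- Theorem 3.8: if `σ` is connected, `τ = 1[ρ]`, and `σ ≃nc τ`, then
`1[σ] ≃nc τ1`. -/
theorem stmt12 (σ τ : List ℕ)
    (hσ : IsRGF σ) (hσnc : NonCrossing σ) (hσc : Connected σ)
    (hτ : IsRGF τ) (hτnc : NonCrossing τ)
    (hform : ∃ ρ : List ℕ, IsRGF ρ ∧ τ = 1 :: ρ.map (· + 1))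
    (h : ∀ n : ℕ, ncAvoidCount n σ = ncAvoidCount n τ) :
    ∀ n : ℕ, ncAvoidCount n (1 :: σ.map (· + 1)) = ncAvoidCount n (τ ++ [1]) := by
  obtain ⟨ρ, hρ, hτe⟩ := hform
  have claimA : ∀ v u : List ℕ, IsRGF v → IsRGF u → NonCrossing v → NonCrossing u →
      (PatAvoids (Aux.glue v u) (1 :: σ.map (· + 1)) ↔
        PatAvoids v (1 :: σ.map (· + 1)) ∧ PatAvoids u σ) := by
    intro v u hv hu _ _
    unfold PatAvoids
    rw [Aux.contains_one_glue hσ hσc hv hu, not_or]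
  have claimB : ∀ v u : List ℕ, IsRGF v → IsRGF u → NonCrossing v → NonCrossing u →
      (PatAvoids (Aux.glue v u) (τ ++ [1]) ↔
        PatAvoids v τ ∧ PatAvoids u (τ ++ [1])) := by
    intro v u hv hu _ _
    unfold PatAvoids
    rw [hτe, Aux.contains_tau1_glue hρ hv hu, not_or]
  have hFeq : ∀ k : ℕ, (Aux.Sset σ k).ncard = (Aux.Sset τ k).ncard := fun k => h k
  have key : ∀ N : ℕ, ∀ n : ℕ, n ≤ N →
      (Aux.Sset (1 :: σ.map (· + 1)) n).ncard = (Aux.Sset (τ ++ [1]) n).ncard := by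
    intro N
    induction N with
    | zero =>
      intro n hn
      have hn0 : n = 0 := by omega
      subst hn0
      rw [Aux.sset_zero (by simp), Aux.sset_zero (by simp)]
    | succ N ih =>
      intro n hn
      rcases Nat.lt_or_ge n (N+1) with hlt | hge
      · exact ih n (by omega)
      · have hn1 : n = N + 1 := by omega
        subst hn1
        rw [Aux.card_step (1 :: σ.map (· + 1)) (1 :: σ.map (· + 1)) σ (by simp) claimA N,
          Aux.card_step (τ ++ [1]) τ (τ ++ [1]) (by simp) claimB N]
        have step1 : ∑ m ∈ Finset.range (N+1),
            (Aux.Sset (1 :: σ.map (· + 1)) m).ncard * (Aux.Sset σ (N - m)).ncard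
            = ∑ m ∈ Finset.range (N+1),
            (Aux.Sset (τ ++ [1]) m).ncard * (Aux.Sset τ (N - m)).ncard := by
          apply Finset.sum_congr rfl
          intro m hm
          rw [ih m (by have := Finset.mem_range.1 hm; omega), hFeq (N - m)]
        rw [step1]
        have step2 := Finset.sum_range_reflect
          (fun m => (Aux.Sset τ m).ncard * (Aux.Sset (τ ++ [1]) (N - m)).ncard) (N+1)
        rw [← step2]
        apply Finset.sum_congr rfl
        intro m hm
        have hmN : m ≤ N := by have := Finset.mem_range.1 hm; omega
        have e1 : N + 1 - 1 - m = N - m := by omega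
        have e2 : N - (N - m) = m := by omega
        rw [e1, e2, Nat.mul_comm]
  intro n
  rw [Aux.ncAvoid_eq, Aux.ncAvoid_eq]
  exact key n n (le_refl n)
end

section
/- Let k ≥ 1 and a ≥ 1, and let ρ be the pattern 12⋯(k−1)k^a, i.e., the strictly increasing word 1,2,…,k followed by a−1 further copies of k. Suppose the patterns σ and τ are strongly partition equivalent. Then for every n, p_n(ρ, σ) = p_n(ρ, τ). -/
/-- Strong partition equivalence: for every `n` there is a bijection between
`σ`-avoiding and `τ`-avoiding RGFs of length `n` preserving the multiplicity of
every letter (equivalently, the size of every block). -/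
def StrongPartEquiv (σ τ : List ℕ) : Prop :=
  ∀ n : ℕ, ∃ f : {w : List ℕ // IsRGF w ∧ w.length = n ∧ PatAvoids w σ} ≃
      {w : List ℕ // IsRGF w ∧ w.length = n ∧ PatAvoids w τ},
    ∀ w, ∀ i : ℕ, ((f w : List ℕ).count i) = ((w : List ℕ).count i)

lemma exists_mem_ge_of_le_foldr {l : List ℕ} {v : ℕ} (hv : 1 ≤ v)
    (h : v ≤ l.foldr max 0) : ∃ x ∈ l, v ≤ x := by
  induction l with
  | nil => simp at h; omega
  | cons a l ih =>
    simp only [List.foldr_cons] at h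
    rcases le_or_gt v a with h' | h'
    · exact ⟨a, by simp, h'⟩
    · obtain ⟨x, hx, hx'⟩ := ih (by omega)
      exact ⟨x, by simp [hx], hx'⟩

lemma rgf_exists_le {w : List ℕ} (hw : IsRGF w) :
    ∀ p, p < w.length → ∀ v, 1 ≤ v → v ≤ w.getD p 0 →
      ∃ q, q ≤ p ∧ w.getD q 0 = v := by
  intro p
  induction p using Nat.strong_induction_on with
  | _ p ih =>
    intro hp v hv1 hv
    match p with
    | 0 =>
      have h0 : w.getD 0 0 = 1 := hw.2.1 (by intro h; simp [h] at hp)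
      exact ⟨0, le_refl _, by omega⟩
    | p + 1 =>
      rcases eq_or_lt_of_le hv with he | hlt
      · exact ⟨p + 1, le_refl _, he.symm⟩
      · have hb := hw.2.2 p hp
        have : v ≤ (w.take (p+1)).foldr max 0 := by omega
        obtain ⟨x, hx, hxv⟩ := exists_mem_ge_of_le_foldr hv1 this
        obtain ⟨q, hq, hqx⟩ := List.mem_iff_getElem.1 hx
        have hq' : q < p + 1 := by
          simpa using hq.trans_le (List.length_take_le _ _)
        have hql : q < w.length := hq'.trans hp
        have hgd : w.getD q 0 = x := by
          rw [List.getD_eq_getElem _ _ hql, ← hqx, List.getElem_take]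
        obtain ⟨q', hq', hq'v⟩ := ih q hq' hql v hv1 (by omega)
        exact ⟨q', by omega, hq'v⟩

lemma rgf_run_sublist {w : List ℕ} (hw : IsRGF w) :
    ∀ p, p < w.length → ∀ j, j ≤ w.getD p 0 →
      ((List.range j).map (fun i => w.getD p 0 - j + 1 + i)).Sublist (w.take (p+1)) := by
  intro p
  induction p using Nat.strong_induction_on with
  | _ p ih =>
    intro hp j hj
    match j with
    | 0 => simp
    | j + 1 =>
      have htake : w.take (p+1) = w.take p ++ [w.getD p 0] := by
        rw [List.getD_eq_getElem _ _ hp]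
        rw [← List.take_concat_get hp, List.concat_eq_append]
      have hsplit : (List.range (j+1)).map (fun i => w.getD p 0 - (j+1) + 1 + i)
          = (List.range j).map (fun i => w.getD p 0 - (j+1) + 1 + i) ++ [w.getD p 0] := by
        rw [List.range_succ, List.map_append]
        congr 1
        simp only [List.map_cons, List.map_nil]
        congr 1
        omega
      rw [htake, hsplit]
      apply List.Sublist.append _ (List.Sublist.refl _)
      -- need: run of length j ending at w.getD p 0 - 1 inside w.take p
      match j with
      | 0 => simp
      | j + 1 =>
        -- w.getD p 0 ≥ 2, so p ≥ 1 and prefix max ≥ w.getD p 0 - 1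
        have hval2 : 2 ≤ w.getD (p) 0 := by omega
        have hp1 : p ≠ 0 := by
          intro h
          have := hw.2.1 (by intro h'; simp [h'] at hp)
          rw [h] at hval2; omega
        obtain ⟨p', rfl⟩ := Nat.exists_eq_succ_of_ne_zero hp1
        simp only [Nat.succ_eq_add_one] at hval2 hj hp ih ⊢
        have hb := hw.2.2 p' hp
        have hmax : w.getD (p'+1) 0 - 1 ≤ (w.take (p'+1)).foldr max 0 := by omega
        obtain ⟨x, hx, hxv⟩ := exists_mem_ge_of_le_foldr (by omega) hmax
        obtain ⟨q, hq, hqx⟩ := List.mem_iff_getElem.1 hx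
        have hq' : q < p' + 1 := by
          simpa using hq.trans_le (List.length_take_le _ _)
        have hql : q < w.length := hq'.trans hp
        have hgd : w.getD q 0 = x := by
          rw [List.getD_eq_getElem _ _ hql, ← hqx, List.getElem_take]
        obtain ⟨q', hq'le, hq'v⟩ := rgf_exists_le hw q hql (w.getD (p'+1) 0 - 1) (by omega) (by omega)
        have hq'lt : q' < p' + 1 := by omega
        have hq'l : q' < w.length := hq'lt.trans hp
        have hrun := ih q' hq'lt hq'l (j+1) (by omega)
        rw [hq'v] at hrun
        have hmapeq : (List.range (j+1)).map (fun i => w.getD (p'+1) 0 - 1 - (j+1) + 1 + i)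
            = (List.range (j+1)).map (fun i => w.getD (p'+1) 0 - (j+1+1) + 1 + i) := by
          apply List.map_congr_left
          intro i hi
          omega
        rw [hmapeq] at hrun
        apply hrun.trans
        have : w.take (q'+1) = (w.take (p'+1)).take (q'+1) := by
          rw [List.take_take]
          congr 1
          omega
        rw [this]
        exact List.take_sublist _ _

lemma rho_length (k a : ℕ) : (incPat k ++ List.replicate (a - 1) k).length = k + (a - 1) := by
  simp [incPat]

lemma rho_getD (k a : ℕ) (hk : 1 ≤ k) (i : ℕ) (hi : i < k + (a - 1)) :
    (incPat k ++ List.replicate (a - 1) k).getD i 0 = 1 + min i (k - 1) := by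
  have hlen : (incPat k).length = k := by simp [incPat]
  rcases lt_or_ge i k with h | h
  · rw [List.getD_append _ _ _ _ (by omega)]
    rw [List.getD_eq_getElem _ _ (by omega)]
    simp only [incPat, List.getElem_map, List.getElem_range]
    omega
  · rw [List.getD_append_right _ _ _ _ (by omega)]
    rw [List.getD_eq_getElem _ _ (by simp; omega), List.getElem_replicate]
    omega

lemma contains_rho_iff {w : List ℕ} (hw : IsRGF w) {k a : ℕ} (hk : 1 ≤ k) (ha : 1 ≤ a) :
    PatContains w (incPat k ++ List.replicate (a - 1) k) ↔
      ∃ m, k ≤ m ∧ a ≤ w.count m := by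
  constructor
  · rintro ⟨s, hsub, hlen, hiso⟩
    rw [rho_length] at hlen
    set m := s.getD (k - 1) 0 with hm
    -- entries are strictly increasing on the first k positions
    have hinc : ∀ i j, i < j → j ≤ k - 1 → s.getD i 0 < s.getD j 0 := by
      intro i j hij hj
      rw [hiso i j (by omega) (by omega)]
      rw [rho_getD k a hk i (by omega), rho_getD k a hk j (by omega)]
      omega
    have h0mem : s.getD 0 0 ∈ s := by
      rw [List.getD_eq_getElem _ _ (by omega)]
      exact List.getElem_mem _
    have h01 : 1 ≤ s.getD 0 0 := hw.1 _ (hsub.mem h0mem)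
    have hstep : ∀ j, j ≤ k - 1 → 1 + j ≤ s.getD j 0 := by
      intro j hj
      induction j with
      | zero => simpa using h01
      | succ j ih =>
        have := hinc j (j+1) (by omega) hj
        have := ih (by omega)
        omega
    have hmk : k ≤ m := by
      have := hstep (k-1) (le_refl _)
      omega
    -- entries from position k-1 on are all equal to m
    have hconst : ∀ i, k - 1 ≤ i → i < k + (a - 1) → s.getD i 0 = m := by
      intro i hi hi'
      have h1 := hiso i (k-1) (by omega) (by omega)
      have h2 := hiso (k-1) i (by omega) (by omega)
      rw [rho_getD k a hk i (by omega), rho_getD k a hk (k-1) (by omega)] at h1 h2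
      omega
    -- count
    have hdlen : (s.drop (k - 1)).length = a := by
      rw [List.length_drop, hlen]; omega
    have hdrop : s.drop (k - 1) = List.replicate a m := by
      rw [← hdlen]
      apply List.eq_replicate_of_mem
      intro b hb
      obtain ⟨i, hi, hib⟩ := List.mem_iff_getElem.1 hb
      rw [List.getElem_drop] at hib
      rw [← hib, ← List.getD_eq_getElem s 0 (by rw [List.length_drop] at hi; omega)]
      exact hconst _ (by omega) (by rw [List.length_drop, hlen] at hi; omega)
    refine ⟨m, hmk, ?_⟩
    calc a = (List.replicate a m).count m := by simp
    _ = (s.drop (k-1)).count m := by rw [hdrop]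
    _ ≤ s.count m := (List.drop_sublist _ _).count_le m
    _ ≤ w.count m := hsub.count_le m
  · rintro ⟨m, hmk, hma⟩
    classical
    have hmem : m ∈ w := by
      rw [← List.count_pos_iff]; omega
    have hex : ∃ q, q < w.length ∧ w.getD q 0 = m := by
      obtain ⟨q, hq, hqm⟩ := List.mem_iff_getElem.1 hmem
      exact ⟨q, hq, by rw [List.getD_eq_getElem _ _ hq, hqm]⟩
    set p := Nat.find hex with hpdef
    have hp : p < w.length ∧ w.getD p 0 = m := Nat.find_spec hex
    have hmin : ∀ q, q < p → ¬(q < w.length ∧ w.getD q 0 = m) :=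
      fun q hq => Nat.find_min hex hq
    have hc0 : (w.take p).count m = 0 := by
      rw [List.count_eq_zero]
      intro hmem'
      obtain ⟨i, hi, him⟩ := List.mem_iff_getElem.1 hmem'
      have hi' : i < p := by
        simpa using hi.trans_le (List.length_take_le _ _)
      refine hmin i hi' ⟨by omega, ?_⟩
      rw [List.getD_eq_getElem _ _ (by omega)]
      rw [List.getElem_take] at him
      exact him
    have htake : w.take (p+1) = w.take p ++ [m] := by
      rw [← List.take_concat_get hp.1, List.concat_eq_append]
      congr 2
      rw [← List.getD_eq_getElem w 0 hp.1]
      exact hp.2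
    have hc1 : (w.take (p+1)).count m = 1 := by
      rw [htake, List.count_append, hc0]; simp
    have hcw : w.count m = (w.take (p+1)).count m + (w.drop (p+1)).count m := by
      conv_lhs => rw [← List.take_append_drop (p+1) w]
      rw [List.count_append]
    have hcd : a - 1 ≤ (w.drop (p+1)).count m := by omega
    have hR := rgf_run_sublist hw p hp.1 k (by rw [hp.2]; omega)
    rw [hp.2] at hR
    set s : List ℕ := (List.range k).map (fun i => m - k + 1 + i) ++ List.replicate (a-1) m
      with hsdef
    have hslen : s.length = k + (a - 1) := by simp [hsdef]
    have hs : ∀ i, i < k + (a - 1) → s.getD i 0 = (m - k + 1) + min i (k - 1) := by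
      intro i hi
      rcases lt_or_ge i k with h | h
      · rw [hsdef, List.getD_append _ _ _ _ (by simpa using h)]
        rw [List.getD_eq_getElem _ _ (by simpa using h)]
        simp only [List.getElem_map, List.getElem_range]
        omega
      · rw [hsdef, List.getD_append_right _ _ _ _ (by simpa using h)]
        rw [List.getD_eq_getElem _ _ (by simp; omega), List.getElem_replicate]
        omega
    refine ⟨s, ?_, ?_, ?_⟩
    · have := hR.append (List.replicate_sublist_iff.2 hcd)
      rwa [List.take_append_drop] at this
    · rw [hslen, rho_length]
    · intro i j hi hj
      rw [hslen] at hi hj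
      rw [hs i hi, hs j hj, rho_getD k a hk i hi, rho_getD k a hk j hj]
      omega


lemma avoids_rho_transfer {u v : List ℕ} {k a : ℕ} (hk : 1 ≤ k) (ha : 1 ≤ a)
    (hu : IsRGF u) (hv : IsRGF v) (hc : ∀ i, v.count i = u.count i)
    (h : PatAvoids u (incPat k ++ List.replicate (a - 1) k)) :
    PatAvoids v (incPat k ++ List.replicate (a - 1) k) := by
  intro hcon
  apply h
  rw [contains_rho_iff hu hk ha]
  obtain ⟨m, hm1, hm2⟩ := (contains_rho_iff hv hk ha).1 hcon
  exact ⟨m, hm1, by rw [← hc m]; exact hm2⟩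

/-- Theorem 4.9: if `ρ = 12⋯(k-1)k^a` and `σ, τ` are strongly partition
equivalent, then the pairs `(ρ, σ)` and `(ρ, τ)` are Wilf-equivalent. -/
theorem stmt14 (k a : ℕ) (hk : 1 ≤ k) (ha : 1 ≤ a) (σ τ : List ℕ)
    (hσ : IsRGF σ) (hτ : IsRGF τ) (h : StrongPartEquiv σ τ) :
    ∀ n : ℕ, pCount n {incPat k ++ List.replicate (a - 1) k, σ}
      = pCount n {incPat k ++ List.replicate (a - 1) k, τ} := by
  intro n
  classical
  obtain ⟨f, hf⟩ := h n
  have hf' : ∀ z, ∀ i : ℕ, ((f.symm z : List ℕ).count i) = ((z : List ℕ).count i) := by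
    intro z i
    have := hf (f.symm z) i
    rw [Equiv.apply_symm_apply] at this
    exact this.symm
  set ρ := incPat k ++ List.replicate (a - 1) k with hρ
  set S1 := {w : List ℕ | IsRGF w ∧ w.length = n ∧ ∀ p ∈ ({ρ, σ} : Set (List ℕ)), PatAvoids w p}
    with hS1
  set S2 := {w : List ℕ | IsRGF w ∧ w.length = n ∧ ∀ p ∈ ({ρ, τ} : Set (List ℕ)), PatAvoids w p}
    with hS2
  have e1 : ↥S1 ≃ {x : {w : List ℕ // IsRGF w ∧ w.length = n ∧ PatAvoids w σ} //
      PatAvoids x.1 ρ} :=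
    { toFun := fun x => ⟨⟨x.1, x.2.1, x.2.2.1, x.2.2.2 σ (Set.mem_insert_of_mem _ rfl)⟩,
        x.2.2.2 ρ (Set.mem_insert _ _)⟩
      invFun := fun x => ⟨x.1.1, x.1.2.1, x.1.2.2.1, by
        intro p hp
        rw [Set.mem_insert_iff, Set.mem_singleton_iff] at hp
        rcases hp with rfl | rfl
        · exact x.2
        · exact x.1.2.2.2⟩
      left_inv := fun x => rfl
      right_inv := fun x => rfl }
  have e2 : ↥S2 ≃ {x : {w : List ℕ // IsRGF w ∧ w.length = n ∧ PatAvoids w τ} //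
      PatAvoids x.1 ρ} :=
    { toFun := fun x => ⟨⟨x.1, x.2.1, x.2.2.1, x.2.2.2 τ (Set.mem_insert_of_mem _ rfl)⟩,
        x.2.2.2 ρ (Set.mem_insert _ _)⟩
      invFun := fun x => ⟨x.1.1, x.1.2.1, x.1.2.2.1, by
        intro p hp
        rw [Set.mem_insert_iff, Set.mem_singleton_iff] at hp
        rcases hp with rfl | rfl
        · exact x.2
        · exact x.1.2.2.2⟩
      left_inv := fun x => rfl
      right_inv := fun x => rfl }
  have emid : {x : {w : List ℕ // IsRGF w ∧ w.length = n ∧ PatAvoids w σ} //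
      PatAvoids x.1 ρ} ≃ {x : {w : List ℕ // IsRGF w ∧ w.length = n ∧ PatAvoids w τ} //
      PatAvoids x.1 ρ} := by
    apply f.subtypeEquiv
    intro x
    constructor
    · intro hx
      exact avoids_rho_transfer hk ha x.2.1 (f x).2.1 (hf x) hx
    · intro hx
      have := avoids_rho_transfer hk ha (f x).2.1 ((f.symm (f x)).2.1) (hf' (f x)) hx
      rwa [Equiv.symm_apply_apply] at this
  have : Nat.card ↥S1 = Nat.card ↥S2 := Nat.card_congr (e1.trans (emid.trans e2.symm))
  show S1.ncard = S2.ncard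
  rw [← Nat.card_coe_set_eq, ← Nat.card_coe_set_eq, this]
end
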